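/- arXiv:2605.11291 — 10 statements merged into one kernel-verified Lean document; each statement's English description precedes it below -/
import Mathlib

section
/- Let k ≥ 1 and let α₀, α₁, …, α_k be strictly positive real numbers. Then the generalized log-sum-exponential function ψ : ℝ^k → ℝ defined by ψ(t₁,…,t_k) = log(α₀ + ∑_{i=1}^k αᵢ e^{t_i}) is strictly convex on ℝ^k. -/
lemma exp_comb_le (x y a b : ℝ) (ha : 0 < a) (hb : 0 < b) (hab : a + b = 1) :
    Real.exp (a * x + b * y) ≤ a * Real.exp x + b * Real.exp y := by
  simpa [smul_eq_mul] using
    convexOn_exp.2 (Set.mem_univ x) (Set.mem_univ y) ha.le hb.le hab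

lemma exp_comb_lt (x y a b : ℝ) (h : x ≠ y) (ha : 0 < a) (hb : 0 < b) (hab : a + b = 1) :
    Real.exp (a * x + b * y) < a * Real.exp x + b * Real.exp y := by
  simpa [smul_eq_mul] using
    strictConvexOn_exp.2 (Set.mem_univ x) (Set.mem_univ y) h ha hb hab

/-- For `k ≥ 1` and strictly positive reals `α₀, α₁, …, α_k`, the generalized
log-sum-exponential function `ψ(t₁,…,t_k) = log(α₀ + ∑ᵢ αᵢ e^{tᵢ})` is strictly convex on `ℝ^k`. -/
theorem stmt0 (k : ℕ) (hk : 1 ≤ k) (α₀ : ℝ) (α : Fin k → ℝ)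
    (hα₀ : 0 < α₀) (hα : ∀ i, 0 < α i) :
    StrictConvexOn ℝ Set.univ
      (fun t : Fin k → ℝ => Real.log (α₀ + ∑ i, α i * Real.exp (t i))) := by
  refine ⟨convex_univ, ?_⟩
  intro u _ v _ huv a b ha hb hab
  simp only [Pi.add_apply, Pi.smul_apply, smul_eq_mul]
  set A : ℝ := α₀ + ∑ i, α i * Real.exp (u i) with hAdef
  set B : ℝ := α₀ + ∑ i, α i * Real.exp (v i) with hBdef
  have hA : 0 < A := by
    apply add_pos_of_pos_of_nonneg hα₀
    exact Finset.sum_nonneg fun i _ => (mul_pos (hα i) (Real.exp_pos _)).le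
  have hB : 0 < B := by
    apply add_pos_of_pos_of_nonneg hα₀
    exact Finset.sum_nonneg fun i _ => (mul_pos (hα i) (Real.exp_pos _)).le
  set c : ℝ := a * Real.log A + b * Real.log B with hcdef
  set X : Fin (k + 1) → ℝ :=
    Fin.cons (Real.log α₀ - Real.log A) (fun i => u i + Real.log (α i) - Real.log A) with hXdef
  set Y : Fin (k + 1) → ℝ :=
    Fin.cons (Real.log α₀ - Real.log B) (fun i => v i + Real.log (α i) - Real.log B) with hYdef
  have hXsum : ∑ i, Real.exp (X i) = 1 := by
    rw [hXdef, Fin.sum_univ_succ]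
    simp only [Fin.cons_zero, Fin.cons_succ]
    have h1 : (∑ i : Fin k, Real.exp (u i + Real.log (α i) - Real.log A))
        = (∑ i, α i * Real.exp (u i)) / A := by
      rw [Finset.sum_div]
      refine Finset.sum_congr rfl fun i _ => ?_
      rw [Real.exp_sub, Real.exp_add, Real.exp_log (hα i), Real.exp_log hA]; ring
    rw [h1, Real.exp_sub, Real.exp_log hα₀, Real.exp_log hA]
    field_simp
    exact hAdef.symm
  have hYsum : ∑ i, Real.exp (Y i) = 1 := by
    rw [hYdef, Fin.sum_univ_succ]
    simp only [Fin.cons_zero, Fin.cons_succ]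
    have h1 : (∑ i : Fin k, Real.exp (v i + Real.log (α i) - Real.log B))
        = (∑ i, α i * Real.exp (v i)) / B := by
      rw [Finset.sum_div]
      refine Finset.sum_congr rfl fun i _ => ?_
      rw [Real.exp_sub, Real.exp_add, Real.exp_log (hα i), Real.exp_log hB]; ring
    rw [h1, Real.exp_sub, Real.exp_log hα₀, Real.exp_log hB]
    field_simp
    exact hBdef.symm
  -- an index where X and Y differ
  have hidx : ∃ i : Fin (k + 1), X i ≠ Y i := by
    by_cases hAB : A = B
    · have : ∃ j, u j ≠ v j := by
        by_contra h
        push_neg at h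
        exact huv (funext h)
      obtain ⟨j, hj⟩ := this
      refine ⟨j.succ, ?_⟩
      simp only [hXdef, hYdef, Fin.cons_succ, hAB]
      intro h
      exact hj (by linarith)
    · refine ⟨0, ?_⟩
      simp only [hXdef, hYdef, Fin.cons_zero]
      intro h
      have hlog : Real.log A = Real.log B := by linarith
      exact hAB (by rw [← Real.exp_log hA, ← Real.exp_log hB, hlog])
  obtain ⟨i₀, hi₀⟩ := hidx
  have key : ∑ i : Fin (k + 1), Real.exp (a * X i + b * Y i) < 1 := by
    have hlt : ∑ i : Fin (k + 1), Real.exp (a * X i + b * Y i)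
        < ∑ i : Fin (k + 1), (a * Real.exp (X i) + b * Real.exp (Y i)) := by
      refine Finset.sum_lt_sum (fun i _ => exp_comb_le _ _ _ _ ha hb hab)
        ⟨i₀, Finset.mem_univ _, exp_comb_lt _ _ _ _ hi₀ ha hb hab⟩
    have heq : ∑ i : Fin (k + 1), (a * Real.exp (X i) + b * Real.exp (Y i)) = 1 := by
      rw [Finset.sum_add_distrib, ← Finset.mul_sum, ← Finset.mul_sum, hXsum, hYsum]
      linarith
    linarith
  -- rewrite the sum in key
  have hsum_eq : ∑ i : Fin (k + 1), Real.exp (a * X i + b * Y i)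
      = (α₀ + ∑ i, α i * Real.exp (a * u i + b * v i)) * Real.exp (-c) := by
    rw [Fin.sum_univ_succ]
    simp only [hXdef, hYdef, Fin.cons_zero, Fin.cons_succ]
    have h0 : a * (Real.log α₀ - Real.log A) + b * (Real.log α₀ - Real.log B)
        = Real.log α₀ + (-c) := by rw [hcdef]; linear_combination Real.log α₀ * hab
    have h1 : ∀ i : Fin k,
        a * (u i + Real.log (α i) - Real.log A) + b * (v i + Real.log (α i) - Real.log B)
        = (a * u i + b * v i) + Real.log (α i) + (-c) := by
      intro i; rw [hcdef]; linear_combination Real.log (α i) * hab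
    rw [h0, Real.exp_add, Real.exp_log hα₀]
    have h2 : (∑ i : Fin k, Real.exp
        (a * (u i + Real.log (α i) - Real.log A) + b * (v i + Real.log (α i) - Real.log B)))
        = ∑ i : Fin k, α i * Real.exp (a * u i + b * v i) * Real.exp (-c) := by
      refine Finset.sum_congr rfl fun i _ => ?_
      rw [h1 i, Real.exp_add, Real.exp_add, Real.exp_log (hα i)]
      ring
    rw [h2, ← Finset.sum_mul]
    ring
  rw [hsum_eq] at key
  have hS : 0 < α₀ + ∑ i, α i * Real.exp (a * u i + b * v i) := by
    apply add_pos_of_pos_of_nonneg hα₀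
    exact Finset.sum_nonneg fun i _ => (mul_pos (hα i) (Real.exp_pos _)).le
  have hlt2 : α₀ + ∑ i, α i * Real.exp (a * u i + b * v i) < Real.exp c := by
    rw [Real.exp_neg, mul_inv_lt_iff₀ (Real.exp_pos c), one_mul] at key
    exact key
  have := Real.log_lt_log hS hlt2
  rwa [Real.log_exp] at this
end

section
/- Let (Ω, 𝔽, P) be a probability space, d ≥ 1, and let u, v : Ω → ℝ^d be random vectors that are independent and identically distributed. If the inner product ⟨u, v⟩ = 0 almost surely, then u = 0 almost surely (and hence v = 0 almost surely). -/
open MeasureTheory ProbabilityTheory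

lemma key_lemma {d : ℕ} (μ : Measure (EuclideanSpace ℝ (Fin d))) [IsProbabilityMeasure μ]
    (h : ∀ᵐ x ∂μ, ∀ᵐ y ∂μ, (inner ℝ x y : ℝ) = 0) : ∀ᵐ x ∂μ, x = 0 := by
  by_contra hc
  set E := EuclideanSpace ℝ (Fin d)
  have hex : ∃ n, ∃ W : Submodule ℝ E, Module.finrank ℝ W = n ∧ μ (W : Set E) = 1 :=
    ⟨Module.finrank ℝ E, ⊤, by simp, by simp⟩
  classical
  obtain ⟨W, hWrank, hWfull⟩ := Nat.find_spec hex
  have hWmeas : MeasurableSet (W : Set E) :=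
    (Submodule.closed_of_finiteDimensional W).measurableSet
  have hWae : ∀ᵐ x ∂μ, x ∈ W := by
    rw [ae_iff]
    have := (prob_compl_eq_zero_iff hWmeas).mpr hWfull
    exact this
  have hfreq : ∃ᶠ x in ae μ, ¬ x = 0 := Filter.not_eventually.mp hc
  obtain ⟨x₀, hx0ne, hx0W, hx0⟩ := (hfreq.and_eventually (hWae.and h)).exists
  set W' : Submodule ℝ E := W ⊓ (ℝ ∙ x₀)ᗮ
  have hW'meas : MeasurableSet (W' : Set E) :=
    (Submodule.closed_of_finiteDimensional W').measurableSet
  have hW'full : μ (W' : Set E) = 1 := by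
    have hae' : ∀ᵐ y ∂μ, y ∈ W' := by
      filter_upwards [hWae, hx0] with y hyW hy
      exact Submodule.mem_inf.mpr ⟨hyW, Submodule.mem_orthogonal_singleton_iff_inner_right.mpr hy⟩
    rw [← prob_compl_eq_zero_iff hW'meas]
    exact ae_iff.mp hae'
  have hlt : W' < W := by
    refine lt_of_le_of_ne inf_le_left ?_
    intro hEq
    have : x₀ ∈ W' := hEq ▸ hx0W
    have h2 : (inner ℝ x₀ x₀ : ℝ) = 0 :=
      Submodule.mem_orthogonal_singleton_iff_inner_right.mp this.2
    exact hx0ne (inner_self_eq_zero.mp h2)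
  have := Nat.find_min hex (hWrank ▸ Submodule.finrank_lt_finrank_of_lt hlt)
  exact this ⟨W', rfl, hW'full⟩

/-- If `u, v : Ω → ℝ^d` are i.i.d. random vectors on a probability space and
`⟨u, v⟩ = 0` almost surely, then `u = 0` almost surely (and hence `v = 0` almost surely). -/
theorem stmt1 {Ω : Type*} [MeasurableSpace Ω] (P : Measure Ω) [IsProbabilityMeasure P]
    (d : ℕ) (hd : 1 ≤ d)
    (u v : Ω → EuclideanSpace ℝ (Fin d))
    (hu : Measurable u) (hv : Measurable v)
    (hindep : IndepFun u v P)
    (hid : Measure.map u P = Measure.map v P)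
    (h0 : ∀ᵐ ω ∂P, (inner ℝ (u ω) (v ω) : ℝ) = 0) :
    (∀ᵐ ω ∂P, u ω = 0) ∧ (∀ᵐ ω ∂P, v ω = 0) := by
  have hprob : IsProbabilityMeasure (Measure.map u P) :=
    Measure.isProbabilityMeasure_map hu.aemeasurable
  have hmap : Measure.map (fun ω => (u ω, v ω)) P =
      (Measure.map u P).prod (Measure.map u P) := by
    rw [(indepFun_iff_map_prod_eq_prod_map_map hu.aemeasurable hv.aemeasurable).mp hindep, hid]
  have hSmeas : MeasurableSet
      {p : EuclideanSpace ℝ (Fin d) × EuclideanSpace ℝ (Fin d) | (inner ℝ p.1 p.2 : ℝ) = 0} := by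
    have : Continuous fun p : EuclideanSpace ℝ (Fin d) × EuclideanSpace ℝ (Fin d) =>
        (inner ℝ p.1 p.2 : ℝ) := continuous_inner
    exact this.measurable (measurableSet_singleton 0)
  have hae : ∀ᵐ p ∂((Measure.map u P).prod (Measure.map u P)), (inner ℝ p.1 p.2 : ℝ) = 0 := by
    rw [← hmap]
    exact (ae_map_iff (hu.prodMk hv).aemeasurable hSmeas).mpr h0
  have haeae : ∀ᵐ x ∂(Measure.map u P), ∀ᵐ y ∂(Measure.map u P), (inner ℝ x y : ℝ) = 0 :=
    Measure.ae_ae_of_ae_prod hae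
  have hzero : ∀ᵐ x ∂(Measure.map u P), x = 0 := key_lemma _ haeae
  constructor
  · exact (ae_map_iff hu.aemeasurable (measurableSet_singleton 0)).mp hzero
  · rw [hid] at hzero
    exact (ae_map_iff hv.aemeasurable (measurableSet_singleton 0)).mp hzero
end

section
/- Let (Ω, 𝔽, P) be a probability space, d ≥ 1, and let z₁, z₂ : Ω → ℝ^d be independent, identically distributed, integrable random vectors with common mean μ := E[z₁] = E[z₂]. If there is a constant γ ∈ ℝ such that the inner product ⟨z₁, z₂⟩ = γ almost surely, then z₁ = μ almost surely, z₂ = μ almost surely, and γ = ‖μ‖². -/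
open MeasureTheory ProbabilityTheory

lemma key_concentrate {d : ℕ} (ρ : Measure (EuclideanSpace ℝ (Fin d)))
    [IsProbabilityMeasure ρ] (μ : EuclideanSpace ℝ (Fin d))
    (h : ∀ᵐ x ∂ρ, ∀ᵐ y ∂ρ, (inner ℝ (x - μ) (y - μ) : ℝ) = 0) :
    ∀ᵐ x ∂ρ, x = μ := by
  set S : Set ℕ :=
    {k | ∃ W : Submodule ℝ (EuclideanSpace ℝ (Fin d)),
      (∀ᵐ x ∂ρ, x - μ ∈ W) ∧ Module.finrank ℝ W = k} with hSdef
  have hS : Module.finrank ℝ (⊤ : Submodule ℝ (EuclideanSpace ℝ (Fin d))) ∈ S :=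
    ⟨⊤, Filter.Eventually.of_forall fun _ => trivial, rfl⟩
  obtain ⟨W₀, hW₀, hrank⟩ := Nat.sInf_mem (⟨_, hS⟩ : S.Nonempty)
  have hmin : ∀ W : Submodule ℝ (EuclideanSpace ℝ (Fin d)),
      (∀ᵐ x ∂ρ, x - μ ∈ W) → W₀ ≤ W := by
    intro W hW
    have h1 : ∀ᵐ x ∂ρ, x - μ ∈ W₀ ⊓ W := by
      filter_upwards [hW₀, hW] with x hx hx'
      exact ⟨hx, hx'⟩
    have h2 : sInf S ≤ Module.finrank ℝ (W₀ ⊓ W : Submodule ℝ (EuclideanSpace ℝ (Fin d))) :=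
      Nat.sInf_le ⟨_, h1, rfl⟩
    have h3 : (W₀ ⊓ W : Submodule ℝ (EuclideanSpace ℝ (Fin d))) = W₀ := by
      apply Submodule.eq_of_le_of_finrank_le inf_le_left
      omega
    calc W₀ = W₀ ⊓ W := h3.symm
      _ ≤ W := inf_le_right
  have horth : ∀ᵐ x ∂ρ, x - μ ∈ W₀ᗮ := by
    filter_upwards [h] with x hx
    have hker : ∀ᵐ y ∂ρ, y - μ ∈ LinearMap.ker (innerₛₗ ℝ (x - μ)) := by
      filter_upwards [hx] with y hy
      rw [LinearMap.mem_ker, innerₛₗ_apply_apply]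
      exact hy
    have hle := hmin _ hker
    rw [Submodule.mem_orthogonal]
    intro u hu
    have h4 := hle hu
    rw [LinearMap.mem_ker, innerₛₗ_apply_apply] at h4
    rw [real_inner_comm]
    exact h4
  filter_upwards [hW₀, horth] with x h1 h2
  have h0 : (inner ℝ (x - μ) (x - μ) : ℝ) = 0 :=
    (Submodule.mem_orthogonal _ _).mp h2 _ h1
  have h5 := inner_self_eq_zero.mp h0
  rwa [sub_eq_zero] at h5

/-- If `z₁, z₂ : Ω → ℝ^d` are i.i.d. integrable random vectors with common mean
`μ = E[z₁] = E[z₂]`, and `⟨z₁, z₂⟩ = γ` almost surely for a constant `γ`, then `z₁ = μ` a.s.,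
`z₂ = μ` a.s., and `γ = ‖μ‖²`. -/
theorem stmt2 {Ω : Type*} [MeasurableSpace Ω] (P : Measure Ω) [IsProbabilityMeasure P]
    (d : ℕ) (hd : 1 ≤ d)
    (z₁ z₂ : Ω → EuclideanSpace ℝ (Fin d))
    (h₁ : Measurable z₁) (h₂ : Measurable z₂)
    (hint₁ : Integrable z₁ P) (hint₂ : Integrable z₂ P)
    (hindep : IndepFun z₁ z₂ P)
    (hid : Measure.map z₁ P = Measure.map z₂ P)
    (μ : EuclideanSpace ℝ (Fin d))
    (hμ₁ : μ = ∫ ω, z₁ ω ∂P) (hμ₂ : μ = ∫ ω, z₂ ω ∂P)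
    (γ : ℝ) (hγ : ∀ᵐ ω ∂P, (inner ℝ (z₁ ω) (z₂ ω) : ℝ) = γ) :
    (∀ᵐ ω ∂P, z₁ ω = μ) ∧ (∀ᵐ ω ∂P, z₂ ω = μ) ∧ γ = ‖μ‖ ^ 2 := by
  set ν : Measure (EuclideanSpace ℝ (Fin d)) := Measure.map z₁ P with hν
  have hprob : IsProbabilityMeasure ν := Measure.isProbabilityMeasure_map h₁.aemeasurable
  -- joint law is product
  have hprod : Measure.map (fun ω => (z₁ ω, z₂ ω)) P = ν.prod ν := by
    rw [(indepFun_iff_map_prod_eq_prod_map_map h₁.aemeasurable h₂.aemeasurable).mp hindep,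
      ← hid]
  -- mean of ν is μ, integrability
  have hμν : μ = ∫ x, x ∂ν :=
    hμ₁.trans (integral_map h₁.aemeasurable aestronglyMeasurable_id).symm
  have hintν : Integrable (fun x => x) ν :=
    (integrable_map_measure aestronglyMeasurable_id h₁.aemeasurable).mpr hint₁
  -- transfer hγ to the product measure
  have hmeas_inner : Measurable
      fun p : EuclideanSpace ℝ (Fin d) × EuclideanSpace ℝ (Fin d) => (inner ℝ p.1 p.2 : ℝ) :=
    (continuous_fst.inner continuous_snd).measurable
  have hγprod : ∀ᵐ p ∂(ν.prod ν), (inner ℝ p.1 p.2 : ℝ) = γ := by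
    have hset : MeasurableSet
        {p : EuclideanSpace ℝ (Fin d) × EuclideanSpace ℝ (Fin d) | (inner ℝ p.1 p.2 : ℝ) = γ} :=
      hmeas_inner (measurableSet_singleton γ)
    have h5 : ∀ᵐ p ∂(Measure.map (fun ω => (z₁ ω, z₂ ω)) P),
        p ∈ {p : EuclideanSpace ℝ (Fin d) × EuclideanSpace ℝ (Fin d) |
          (inner ℝ p.1 p.2 : ℝ) = γ} := by
      exact (ae_map_iff (h₁.prodMk h₂).aemeasurable hset).mpr hγ
    rwa [hprod] at h5
  have hxy : ∀ᵐ x ∂ν, ∀ᵐ y ∂ν, (inner ℝ x y : ℝ) = γ :=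
    Measure.ae_ae_of_ae_prod hγprod
  -- for a.e. x, ⟨x, μ⟩ = γ
  have hxμ : ∀ᵐ x ∂ν, (inner ℝ x μ : ℝ) = γ := by
    filter_upwards [hxy] with x hx
    have h1 : ∫ y, (inner ℝ x y : ℝ) ∂ν = γ := by
      rw [integral_congr_ae hx]
      simp
    have h2 : ∫ y, (inner ℝ x y : ℝ) ∂ν = (inner ℝ x (∫ y, y ∂ν) : ℝ) := integral_inner hintν x
    rw [hμν, ← h2, h1]
  -- γ = ‖μ‖²
  have hγμ : γ = ‖μ‖ ^ 2 := by
    have h1 : ∫ x, (inner ℝ x μ : ℝ) ∂ν = γ := by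
      rw [integral_congr_ae hxμ]
      simp
    have h2 : ∫ x, (inner ℝ μ x : ℝ) ∂ν = (inner ℝ μ (∫ x, x ∂ν) : ℝ) := integral_inner hintν μ
    have h3 : ∫ x, (inner ℝ x μ : ℝ) ∂ν = ∫ x, (inner ℝ μ x : ℝ) ∂ν := by
      simp_rw [fun x : EuclideanSpace ℝ (Fin d) => real_inner_comm x μ]
    rw [← h1, h3, h2, ← hμν, real_inner_self_eq_norm_sq]
  -- centered orthogonality
  have hcent : ∀ᵐ x ∂ν, ∀ᵐ y ∂ν, (inner ℝ (x - μ) (y - μ) : ℝ) = 0 := by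
    filter_upwards [hxy, hxμ] with x hx hxm
    filter_upwards [hx, hxμ] with y hy hym
    have hμy : (inner ℝ μ y : ℝ) = γ := by rw [real_inner_comm]; exact hym
    rw [inner_sub_left, inner_sub_right, inner_sub_right, hy, hxm, hμy,
      real_inner_self_eq_norm_sq, ← hγμ]
    ring
  have hconc : ∀ᵐ x ∂ν, x = μ := key_concentrate ν μ hcent
  have hconc' : ∀ᵐ x ∂ν, x ∈ {y : EuclideanSpace ℝ (Fin d) | y = μ} := hconc
  have hz₁ : ∀ᵐ ω ∂P, z₁ ω = μ := by
    have h6 := (ae_map_iff h₁.aemeasurable (measurableSet_eq_fun measurable_id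
      measurable_const)).mp hconc'
    exact h6
  have hz₂ : ∀ᵐ ω ∂P, z₂ ω = μ := by
    have hconc₂ : ∀ᵐ x ∂(Measure.map z₂ P), x ∈ {y : EuclideanSpace ℝ (Fin d) | y = μ} := by
      rw [← hid]; exact hconc'
    exact (ae_map_iff h₂.aemeasurable (measurableSet_eq_fun measurable_id
      measurable_const)).mp hconc₂
  exact ⟨hz₁, hz₂, hγμ⟩
end

section
/- Let k, d, C ≥ 1, let λ₁,…,λ_C ∈ (0,1) with ∑_{i=1}^C λᵢ = 1, and let ψ : ℝ^k → ℝ be argument-wise strictly increasing. Let M ∈ ℝ^{d×C} have columns μ₁,…,μ_C, each of unit Euclidean norm and with all entries nonnegative. Then S(MᵀM) ≥ S(I_C), where I_C is the C×C identity matrix, with equality if and only if the columns μ₁,…,μ_C are pairwise orthogonal (i.e., orthonormal). In particular, if d < C the inequality is strict, since C orthonormal vectors in ℝ^d require d ≥ C. -/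
open Matrix

/-- `ψ : ℝ^k → ℝ` is argument-wise strictly increasing: strictly increasing in each coordinate
when the other coordinates are held fixed. -/
def ArgwiseStrictMono {k : ℕ} (ψ : (Fin k → ℝ) → ℝ) : Prop :=
  ∀ (i : Fin k) (t : Fin k → ℝ) (s s' : ℝ), s < s' →
    ψ (Function.update t i s) < ψ (Function.update t i s')

/-- `S(A) = ∑_{i, j₁,…,j_k} (λᵢ ∏ₜ λ_{jₜ}) ψ(A_{i j₁} − 1, …, A_{i j_k} − 1)`. -/
noncomputable def S {k C : ℕ} (ψ : (Fin k → ℝ) → ℝ) (lam : Fin C → ℝ)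
    (A : Matrix (Fin C) (Fin C) ℝ) : ℝ :=
  ∑ i : Fin C, ∑ j : Fin k → Fin C,
    (lam i * ∏ t, lam (j t)) * ψ (fun t => A i (j t) - 1)

lemma psi_mono {k : ℕ} {ψ : (Fin k → ℝ) → ℝ} (hψ : ArgwiseStrictMono ψ)
    (a b : Fin k → ℝ) (hab : ∀ t, a t ≤ b t) : ψ a ≤ ψ b := by
  have key : ∀ s : Finset (Fin k), ψ (s.piecewise a b) ≤ ψ b := by
    intro s
    induction s using Finset.induction with
    | empty => simp
    | @insert t0 s hns ih =>
      rw [Finset.piecewise_insert]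
      have hval : (s.piecewise a b) t0 = b t0 := Finset.piecewise_eq_of_notMem _ _ _ hns
      rcases eq_or_lt_of_le (hab t0) with h | h
      · have : Function.update (s.piecewise a b) t0 (a t0) = s.piecewise a b := by
          rw [h, ← hval, Function.update_eq_self]
        rw [this]; exact ih
      · have h2 : ψ (Function.update (s.piecewise a b) t0 (a t0)) <
            ψ (Function.update (s.piecewise a b) t0 (b t0)) := hψ t0 _ _ _ h
        rw [← hval, Function.update_eq_self] at h2
        exact le_trans h2.le ih
  have := key Finset.univ
  rwa [Finset.piecewise_univ] at this

lemma psi_strict {k : ℕ} {ψ : (Fin k → ℝ) → ℝ} (hψ : ArgwiseStrictMono ψ)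
    (a b : Fin k → ℝ) (hab : ∀ t, a t ≤ b t) (t0 : Fin k) (h : a t0 < b t0) :
    ψ a < ψ b := by
  have h1 : ψ a ≤ ψ (Function.update b t0 (a t0)) := by
    refine psi_mono hψ _ _ fun t => ?_
    rcases eq_or_ne t t0 with rfl | hne
    · simp
    · simp [Function.update_of_ne hne, hab t]
  have h2 : ψ (Function.update b t0 (a t0)) < ψ (Function.update b t0 (b t0)) :=
    hψ t0 b _ _ h
  rw [Function.update_eq_self] at h2
  exact lt_of_le_of_lt h1 h2

lemma S_mono {k C : ℕ} {ψ : (Fin k → ℝ) → ℝ} (hψ : ArgwiseStrictMono ψ)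
    {lam : Fin C → ℝ} (hlam : ∀ i, 0 < lam i)
    {A B : Matrix (Fin C) (Fin C) ℝ} (hAB : ∀ i j, A i j ≤ B i j) :
    S ψ lam A ≤ S ψ lam B := by
  refine Finset.sum_le_sum fun i _ => Finset.sum_le_sum fun j _ => ?_
  have hw : 0 ≤ lam i * ∏ t, lam (j t) :=
    le_of_lt (mul_pos (hlam i) (Finset.prod_pos fun t _ => hlam (j t)))
  exact mul_le_mul_of_nonneg_left
    (psi_mono hψ _ _ fun t => by have := hAB i (j t); linarith) hw

lemma S_strict {k C : ℕ} (hk : 1 ≤ k) {ψ : (Fin k → ℝ) → ℝ} (hψ : ArgwiseStrictMono ψ)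
    {lam : Fin C → ℝ} (hlam : ∀ i, 0 < lam i)
    {A B : Matrix (Fin C) (Fin C) ℝ} (hAB : ∀ i j, A i j ≤ B i j)
    (i0 j0 : Fin C) (hstrict : A i0 j0 < B i0 j0) :
    S ψ lam A < S ψ lam B := by
  refine Finset.sum_lt_sum (fun i _ => Finset.sum_le_sum fun j _ => ?_)
    ⟨i0, Finset.mem_univ _, ?_⟩
  · exact mul_le_mul_of_nonneg_left
      (psi_mono hψ _ _ fun t => by have := hAB i (j t); linarith)
      (le_of_lt (mul_pos (hlam i) (Finset.prod_pos fun t _ => hlam (j t))))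
  · refine Finset.sum_lt_sum (fun j _ => ?_) ⟨(fun _ => j0), Finset.mem_univ _, ?_⟩
    · exact mul_le_mul_of_nonneg_left
        (psi_mono hψ _ _ fun t => by have := hAB i0 (j t); linarith)
        (le_of_lt (mul_pos (hlam i0) (Finset.prod_pos fun t _ => hlam (j t))))
    · refine mul_lt_mul_of_pos_left ?_
        (mul_pos (hlam i0) (Finset.prod_pos fun t _ => hlam j0))
      exact psi_strict hψ _ _ (fun t => by have := hstrict.le; linarith)
        ⟨0, hk⟩ (by simpa using hstrict)

/-- For `M` with unit-norm nonnegative columns, `S(MᵀM) ≥ S(I_C)`, with equality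
iff the columns are pairwise orthogonal; and the inequality is strict whenever `d < C`. -/
theorem stmt3 (k d C : ℕ) (hk : 1 ≤ k) (hd : 1 ≤ d) (hC : 1 ≤ C)
    (lam : Fin C → ℝ) (hlam : ∀ i, lam i ∈ Set.Ioo (0 : ℝ) 1) (hsum : ∑ i, lam i = 1)
    (ψ : (Fin k → ℝ) → ℝ) (hψ : ArgwiseStrictMono ψ)
    (M : Matrix (Fin d) (Fin C) ℝ)
    (hcols : ∀ j, ∑ i, (M i j) ^ 2 = 1)
    (hnonneg : ∀ i j, 0 ≤ M i j) :
    S ψ lam (1 : Matrix (Fin C) (Fin C) ℝ) ≤ S ψ lam (Mᵀ * M) ∧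
    (S ψ lam (Mᵀ * M) = S ψ lam (1 : Matrix (Fin C) (Fin C) ℝ) ↔
      ∀ j j' : Fin C, j ≠ j' → ∑ i, M i j * M i j' = 0) ∧
    (d < C → S ψ lam (1 : Matrix (Fin C) (Fin C) ℝ) < S ψ lam (Mᵀ * M)) := by
  have hlam' : ∀ i, 0 < lam i := fun i => (hlam i).1
  set A := Mᵀ * M with hA
  have hAentry : ∀ i j, A i j = ∑ x, M x i * M x j := by
    intro i j
    simp [hA, Matrix.mul_apply, Matrix.transpose_apply]
  have hAdiag : ∀ i, A i i = 1 := by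
    intro i
    rw [hAentry]
    have := hcols i
    simpa [sq] using this
  have hAnn : ∀ i j, 0 ≤ A i j := by
    intro i j
    rw [hAentry]
    exact Finset.sum_nonneg fun x _ => mul_nonneg (hnonneg x i) (hnonneg x j)
  have hIA : ∀ i j, (1 : Matrix (Fin C) (Fin C) ℝ) i j ≤ A i j := by
    intro i j
    rcases eq_or_ne i j with rfl | hne
    · simp [hAdiag i]
    · rw [Matrix.one_apply_ne hne]
      exact hAnn i j
  have hle : S ψ lam (1 : Matrix (Fin C) (Fin C) ℝ) ≤ S ψ lam A :=
    S_mono hψ hlam' hIA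
  have hiff : S ψ lam A = S ψ lam (1 : Matrix (Fin C) (Fin C) ℝ) ↔
      ∀ j j' : Fin C, j ≠ j' → ∑ i, M i j * M i j' = 0 := by
    constructor
    · intro heq j j' hne
      by_contra h0
      have hpos : 0 < ∑ i, M i j * M i j' :=
        lt_of_le_of_ne
          (Finset.sum_nonneg fun x _ => mul_nonneg (hnonneg x j) (hnonneg x j'))
          (Ne.symm h0)
      have hstrict : (1 : Matrix (Fin C) (Fin C) ℝ) j j' < A j j' := by
        rw [Matrix.one_apply_ne hne, hAentry]
        exact hpos
      have := S_strict hk hψ hlam' hIA j j' hstrict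
      linarith
    · intro horth
      have hAeq : A = (1 : Matrix (Fin C) (Fin C) ℝ) := by
        ext i j
        rcases eq_or_ne i j with rfl | hne
        · simp [hAdiag i]
        · rw [Matrix.one_apply_ne hne, hAentry]
          exact horth i j hne
      rw [hAeq]
  refine ⟨hle, hiff, fun hdC => ?_⟩
  have hnotorth : ¬ ∀ j j' : Fin C, j ≠ j' → ∑ i, M i j * M i j' = 0 := by
    intro horth
    have hAeq : A = (1 : Matrix (Fin C) (Fin C) ℝ) := by
      ext i j
      rcases eq_or_ne i j with rfl | hne
      · simp [hAdiag i]
      · rw [Matrix.one_apply_ne hne, hAentry]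
        exact horth i j hne
    have h1 : (1 : Matrix (Fin C) (Fin C) ℝ).rank = C := by
      simp [Matrix.rank_one]
    have h2 : A.rank ≤ d := by
      calc A.rank ≤ M.rank := Matrix.rank_mul_le_right _ _
        _ ≤ d := by simpa using M.rank_le_card_height
    rw [hAeq, h1] at h2
    omega
  exact lt_of_le_of_ne hle fun h => hnotorth (hiff.mp h.symm)
end

section
/- Let k ≥ 1, C ≥ 2, λ₁,…,λ_C ∈ (0,1) with ∑_{i=1}^C λᵢ = 1, and let ψ : ℝ^k → ℝ be strictly convex and argument-wise strictly increasing. Then: (i) 𝒜* is a convex and compact subset of ℝ^{C×C}; (ii) S is strictly convex on 𝒜*; (iii) S attains its minimum over 𝒜* at a unique matrix A* ∈ 𝒜*. -/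
open Matrix

/-- `𝒜*` : real symmetric PSD `C×C` matrices with unit diagonal. -/
def AstarSet (C : ℕ) : Set (Matrix (Fin C) (Fin C) ℝ) :=
  {A | A.PosSemidef ∧ ∀ i, A i i = 1}

lemma psd_smul {C : ℕ} {A : Matrix (Fin C) (Fin C) ℝ} (hA : A.PosSemidef) {c : ℝ}
    (hc : 0 ≤ c) : (c • A).PosSemidef := by
  refine posSemidef_iff_dotProduct_mulVec.mpr ⟨?_, fun x => ?_⟩
  · have h := hA.1
    unfold Matrix.IsHermitian at h ⊢
    rw [conjTranspose_smul, h, star_trivial]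
  · rw [smul_mulVec, dotProduct_smul]
    exact mul_nonneg hc (hA.dotProduct_mulVec_nonneg x)

lemma astar_convex (C : ℕ) : Convex ℝ (AstarSet C) := by
  rintro A ⟨hA, hAd⟩ B ⟨hB, hBd⟩ a b ha hb hab
  refine ⟨(psd_smul hA ha).add (psd_smul hB hb), fun i => ?_⟩
  simp only [Matrix.add_apply, Matrix.smul_apply, hAd i, hBd i, smul_eq_mul, mul_one]
  exact hab

lemma astar_entry_mem {C : ℕ} {A : Matrix (Fin C) (Fin C) ℝ} (hA : A ∈ AstarSet C)
    (i j : Fin C) : A i j ∈ Set.Icc (-1 : ℝ) 1 := by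
  obtain ⟨hpsd, hdiag⟩ := hA
  have hsymm : A j i = A i j := by
    have h := hpsd.1.apply i j
    simpa using h
  have key : ∀ c : ℝ, 0 ≤ 1 + 2 * c * A i j + c ^ 2 := by
    intro c
    have h := hpsd.dotProduct_mulVec_nonneg (Pi.single i 1 + Pi.single j c)
    rw [star_trivial, mulVec_add, dotProduct_add, add_dotProduct, add_dotProduct,
      mulVec_single, mulVec_single, single_dotProduct, single_dotProduct,
      single_dotProduct, single_dotProduct] at h
    simp only [Pi.smul_apply, col_apply, op_smul_eq_mul, mul_one, hdiag i, hdiag j, hsymm] at h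
    nlinarith [h]
  have h1 := key 1
  have h2 := key (-1)
  constructor <;> nlinarith

lemma astar_compact (C : ℕ) : IsCompact (AstarSet C) := by
  have hK : IsCompact (Set.pi Set.univ fun _ : Fin C =>
      Set.pi Set.univ fun _ : Fin C => Set.Icc (-1 : ℝ) 1) :=
    isCompact_univ_pi fun _ => isCompact_univ_pi fun _ => isCompact_Icc
  refine IsCompact.of_isClosed_subset hK ?_ ?_
  · have hcont : ∀ i j : Fin C, Continuous fun A : Matrix (Fin C) (Fin C) ℝ => A i j :=
      fun i j => (continuous_apply j).comp (continuous_apply i)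
    have h1 : IsClosed {A : Matrix (Fin C) (Fin C) ℝ | A.IsHermitian} := by
      have : {A : Matrix (Fin C) (Fin C) ℝ | A.IsHermitian} =
          ⋂ i, ⋂ j, {A : Matrix (Fin C) (Fin C) ℝ | A j i = A i j} := by
        ext A
        simp only [Set.mem_setOf_eq, Set.mem_iInter]
        constructor
        · intro h i j
          have h' := h.apply i j
          simpa using h'
        · intro h
          unfold Matrix.IsHermitian
          ext i j
          simp [Matrix.conjTranspose_apply, h]
      rw [this]
      exact isClosed_iInter fun i => isClosed_iInter fun j =>
        isClosed_eq (hcont j i) (hcont i j)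
    have h2 : IsClosed {A : Matrix (Fin C) (Fin C) ℝ |
        ∀ x : Fin C → ℝ, 0 ≤ dotProduct (star x) (A *ᵥ x)} := by
      have : {A : Matrix (Fin C) (Fin C) ℝ | ∀ x : Fin C → ℝ, 0 ≤ dotProduct (star x) (A *ᵥ x)} =
          ⋂ x : Fin C → ℝ, {A | 0 ≤ dotProduct (star x) (A *ᵥ x)} := by
        ext A; simp
      rw [this]
      refine isClosed_iInter fun x => isClosed_le continuous_const ?_
      simp only [dotProduct, mulVec]
      exact continuous_finset_sum _ fun r _ => Continuous.mul continuous_const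
        (continuous_finset_sum _ fun s _ => (hcont r s).mul continuous_const)
    have h3 : IsClosed {A : Matrix (Fin C) (Fin C) ℝ | ∀ i, A i i = 1} := by
      have : {A : Matrix (Fin C) (Fin C) ℝ | ∀ i, A i i = 1} =
          ⋂ i, {A : Matrix (Fin C) (Fin C) ℝ | A i i = 1} := by ext A; simp
      rw [this]
      exact isClosed_iInter fun i => isClosed_eq (hcont i i) continuous_const
    have : AstarSet C = ({A | A.IsHermitian} ∩
        {A | ∀ x : Fin C → ℝ, 0 ≤ dotProduct (star x) (A *ᵥ x)}) ∩
        {A | ∀ i, A i i = 1} := by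
      ext A
      exact ⟨fun ⟨hp, h3⟩ => ⟨posSemidef_iff_dotProduct_mulVec.mp hp, h3⟩,
        fun ⟨hp, h3⟩ => ⟨posSemidef_iff_dotProduct_mulVec.mpr hp, h3⟩⟩
    rw [this]
    exact (h1.inter h2).inter h3
  · intro A hA
    intro i _
    intro j _
    exact astar_entry_mem hA i j

lemma S_strictConvex {k C : ℕ} (hk : 1 ≤ k) (lam : Fin C → ℝ)
    (hlam : ∀ i, lam i ∈ Set.Ioo (0 : ℝ) 1) (ψ : (Fin k → ℝ) → ℝ)
    (hconv : StrictConvexOn ℝ Set.univ ψ) :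
    StrictConvexOn ℝ (AstarSet C) (S ψ lam) := by
  refine ⟨astar_convex C, ?_⟩
  intro A hA B hB hne a b ha hb hab
  -- rewrite as sums over the product type
  have hw : ∀ (i : Fin C) (j : Fin k → Fin C), 0 < lam i * ∏ t, lam (j t) :=
    fun i j => mul_pos (hlam i).1 (Finset.prod_pos fun t _ => (hlam (j t)).1)
  -- the affine argument vectors
  set u : Fin C → (Fin k → Fin C) → (Fin k → ℝ) := fun i j t => A i (j t) - 1 with hu
  set v : Fin C → (Fin k → Fin C) → (Fin k → ℝ) := fun i j t => B i (j t) - 1 with hv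
  have harg : ∀ (i : Fin C) (j : Fin k → Fin C),
      (fun t => (a • A + b • B) i (j t) - 1) = a • (u i j) + b • (v i j) := by
    intro i j
    funext t
    simp only [Matrix.add_apply, Matrix.smul_apply, smul_eq_mul, Pi.add_apply, Pi.smul_apply,
      u, v]
    ring_nf
    nlinarith [hab]
  -- strict inequality witness
  obtain ⟨i₀, c₀, hne₀⟩ : ∃ i c, A i c ≠ B i c := by
    by_contra h
    push_neg at h
    exact hne (by ext i c; exact h i c)
  have hne' : u i₀ (fun _ => c₀) ≠ v i₀ (fun _ => c₀) := by
    intro h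
    have := congrFun h ⟨0, hk⟩
    simp only [u, v] at this
    exact hne₀ (by linarith)
  -- the per-term inequalities
  have hle : ∀ (i : Fin C) (j : Fin k → Fin C),
      (lam i * ∏ t, lam (j t)) * ψ (fun t => (a • A + b • B) i (j t) - 1) ≤
      a * ((lam i * ∏ t, lam (j t)) * ψ (u i j)) +
      b * ((lam i * ∏ t, lam (j t)) * ψ (v i j)) := by
    intro i j
    rw [harg i j]
    have h := hconv.convexOn.2 (Set.mem_univ (u i j)) (Set.mem_univ (v i j)) ha.le hb.le hab
    simp only [smul_eq_mul] at h
    nlinarith [hw i j, h]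
  have hlt :
      (lam i₀ * ∏ t, lam ((fun _ : Fin k => c₀) t)) *
        ψ (fun t => (a • A + b • B) i₀ ((fun _ : Fin k => c₀) t) - 1) <
      a * ((lam i₀ * ∏ t, lam ((fun _ : Fin k => c₀) t)) * ψ (u i₀ fun _ => c₀)) +
      b * ((lam i₀ * ∏ t, lam ((fun _ : Fin k => c₀) t)) * ψ (v i₀ fun _ => c₀)) := by
    rw [harg i₀ (fun _ => c₀)]
    have h := hconv.2 (Set.mem_univ (u i₀ fun _ => c₀)) (Set.mem_univ (v i₀ fun _ => c₀))
      hne' ha hb hab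
    simp only [smul_eq_mul] at h
    nlinarith [hw i₀ (fun _ => c₀), h]
  -- assemble
  have hrw : ∀ M : Matrix (Fin C) (Fin C) ℝ, S ψ lam M =
      ∑ p : Fin C × (Fin k → Fin C),
        (lam p.1 * ∏ t, lam (p.2 t)) * ψ (fun t => M p.1 (p.2 t) - 1) := by
    intro M
    exact (Fintype.sum_prod_type (f := fun p : Fin C × (Fin k → Fin C) =>
      (lam p.1 * ∏ t, lam (p.2 t)) * ψ (fun t => M p.1 (p.2 t) - 1))).symm
  rw [hrw, hrw, hrw]
  simp only [smul_eq_mul]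
  rw [Finset.mul_sum, Finset.mul_sum, ← Finset.sum_add_distrib]
  refine Finset.sum_lt_sum (fun p _ => hle p.1 p.2) ?_
  exact ⟨(i₀, fun _ => c₀), Finset.mem_univ _, hlt⟩

/-- for strictly convex, argument-wise strictly increasing `ψ`:
(i) `𝒜*` is convex and compact; (ii) `S` is strictly convex on `𝒜*`;
(iii) `S` attains its minimum over `𝒜*` at a unique matrix. -/
theorem stmt5 (k C : ℕ) (hk : 1 ≤ k) (hC : 2 ≤ C)
    (lam : Fin C → ℝ) (hlam : ∀ i, lam i ∈ Set.Ioo (0 : ℝ) 1) (hsum : ∑ i, lam i = 1)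
    (ψ : (Fin k → ℝ) → ℝ)
    (hconv : StrictConvexOn ℝ Set.univ ψ) (hmono : ArgwiseStrictMono ψ) :
    Convex ℝ (AstarSet C) ∧ IsCompact (AstarSet C) ∧
    StrictConvexOn ℝ (AstarSet C) (S ψ lam) ∧
    ∃! A, A ∈ AstarSet C ∧ ∀ B ∈ AstarSet C, S ψ lam A ≤ S ψ lam B := by
  have hSconv := S_strictConvex hk lam hlam ψ hconv
  refine ⟨astar_convex C, astar_compact C, hSconv, ?_⟩
  -- continuity of ψ
  have hψc : Continuous ψ := by
    exact continuousOn_univ.mp (hconv.convexOn.continuousOn isOpen_univ)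
  have hScont : Continuous (S ψ lam) := by
    unfold S
    refine continuous_finset_sum _ fun i _ => continuous_finset_sum _ fun j _ => ?_
    refine Continuous.mul continuous_const (hψc.comp ?_)
    exact continuous_pi fun t =>
      (((continuous_apply (j t)).comp (continuous_apply i) :
        Continuous fun A : Matrix (Fin C) (Fin C) ℝ => A i (j t)).sub continuous_const)
  have hne : (AstarSet C).Nonempty := ⟨1, Matrix.PosSemidef.one, fun i => Matrix.one_apply_eq i⟩
  obtain ⟨A, hAmem, hAmin⟩ := (astar_compact C).exists_isMinOn hne hScont.continuousOn
  refine ⟨A, ⟨hAmem, fun B hB => hAmin hB⟩, ?_⟩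
  rintro B ⟨hBmem, hBmin⟩
  exact hSconv.eq_of_isMinOn (isMinOn_iff.mpr fun y hy => hBmin y hy)
    (isMinOn_iff.mpr fun y hy => hAmin hy) hBmem hAmem
end

section
/- Let k ≥ 1, C ≥ 2, λ₁,…,λ_C ∈ (0,1) with ∑_{i=1}^C λᵢ = 1, and let ψ : ℝ^k → ℝ be strictly convex and argument-wise strictly increasing. Let A* be the unique minimizer of S over 𝒜*, and let 𝒞' ⊆ {1,…,C} be a subset of indices whose probabilities are all equal (λᵢ = λⱼ for all i, j ∈ 𝒞'). Then there exists a constant c ∈ ℝ such that A*_{ij} = c for all distinct i, j ∈ 𝒞'. -/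
open Matrix

lemma S_prod {k C : ℕ} (ψ : (Fin k → ℝ) → ℝ) (lam : Fin C → ℝ)
    (A : Matrix (Fin C) (Fin C) ℝ) :
    S ψ lam A = ∑ p : (Fin C) × (Fin k → Fin C),
      (lam p.1 * ∏ t, lam (p.2 t)) * ψ (fun t => A p.1 (p.2 t) - 1) := by
  rw [S, Fintype.sum_prod_type]

lemma psd_smul_half {n : ℕ} {M : Matrix (Fin n) (Fin n) ℝ} (hM : M.PosSemidef) :
    ((2:ℝ)⁻¹ • M).PosSemidef := by
  refine ⟨?_, fun x => ?_⟩
  · unfold Matrix.IsHermitian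
    have := hM.1
    unfold Matrix.IsHermitian at this
    rw [conjTranspose_smul, this]
    simp
  · exact (hM.smul (by norm_num : (0:ℝ) ≤ 2⁻¹)).2 x

lemma midpoint_lt {k C : ℕ} (hk : 1 ≤ k) (lam : Fin C → ℝ) (hlam : ∀ i, 0 < lam i)
    (ψ : (Fin k → ℝ) → ℝ) (hconv : StrictConvexOn ℝ Set.univ ψ)
    (A B : Matrix (Fin C) (Fin C) ℝ) (hne : A ≠ B) :
    S ψ lam ((2:ℝ)⁻¹ • (A + B)) < (2:ℝ)⁻¹ * S ψ lam A + (2:ℝ)⁻¹ * S ψ lam B := by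
  rw [S_prod, S_prod, S_prod, Finset.mul_sum, Finset.mul_sum, ← Finset.sum_add_distrib]
  have hw : ∀ p : (Fin C) × (Fin k → Fin C), 0 < lam p.1 * ∏ t, lam (p.2 t) := by
    intro p
    exact mul_pos (hlam p.1) (Finset.prod_pos fun t _ => hlam (p.2 t))
  have hmid : ∀ p : (Fin C) × (Fin k → Fin C),
      (fun t => ((2:ℝ)⁻¹ • (A + B)) p.1 (p.2 t) - 1) =
        (2:ℝ)⁻¹ • (fun t => A p.1 (p.2 t) - 1) + (2:ℝ)⁻¹ • (fun t => B p.1 (p.2 t) - 1) := by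
    intro p
    funext t
    simp only [Matrix.smul_apply, Matrix.add_apply, Pi.add_apply, Pi.smul_apply, smul_eq_mul]
    ring
  apply Finset.sum_lt_sum
  · intro p _
    rw [hmid p]
    have h := hconv.convexOn.2 (Set.mem_univ (fun t => A p.1 (p.2 t) - 1))
      (Set.mem_univ (fun t => B p.1 (p.2 t) - 1))
      (by norm_num : (0:ℝ) ≤ 2⁻¹) (by norm_num : (0:ℝ) ≤ 2⁻¹) (by norm_num)
    simp only [smul_eq_mul] at h
    nlinarith [hw p, mul_le_mul_of_nonneg_left h (hw p).le]
  · have : ∃ i j, A i j ≠ B i j := by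
      by_contra h
      push_neg at h
      exact hne (by ext i j; exact h i j)
    obtain ⟨i₀, j₀, hij⟩ := this
    refine ⟨(i₀, fun _ => j₀), Finset.mem_univ _, ?_⟩
    set p : (Fin C) × (Fin k → Fin C) := (i₀, fun _ => j₀)
    rw [hmid p]
    have hxy : (fun t : Fin k => A p.1 (p.2 t) - 1) ≠ (fun t => B p.1 (p.2 t) - 1) := by
      intro h
      have := congrFun h ⟨0, hk⟩
      simp only [p] at this
      apply hij
      linarith [this]
    have h := hconv.2 (Set.mem_univ (fun t => A p.1 (p.2 t) - 1))
      (Set.mem_univ (fun t => B p.1 (p.2 t) - 1)) hxy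
      (by norm_num : (0:ℝ) < 2⁻¹) (by norm_num : (0:ℝ) < 2⁻¹) (by norm_num)
    simp only [smul_eq_mul] at h
    nlinarith [hw p, mul_lt_mul_of_pos_left h (hw p)]

lemma S_perm {k C : ℕ} (ψ : (Fin k → ℝ) → ℝ) (lam : Fin C → ℝ)
    (A : Matrix (Fin C) (Fin C) ℝ) (σ : Equiv.Perm (Fin C))
    (hσ : ∀ i, lam (σ i) = lam i) :
    S ψ lam (A.submatrix σ σ) = S ψ lam A := by
  unfold S
  apply Fintype.sum_bijective σ σ.bijective
  intro i
  apply Fintype.sum_bijective (fun j : Fin k → Fin C => σ ∘ j)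
    (Equiv.piCongrRight fun _ : Fin k => σ).bijective
  intro j
  simp only [Matrix.submatrix_apply, Function.comp_apply, hσ]

/-- if `A*` is the (unique) minimizer of `S` over `𝒜*` and `𝒞'` is a set of
classes with equal probabilities, then all off-diagonal entries of `A*` indexed by distinct
elements of `𝒞'` are equal to a common constant. -/
theorem stmt11 (k C : ℕ) (hk : 1 ≤ k) (hC : 2 ≤ C)
    (lam : Fin C → ℝ) (hlam : ∀ i, lam i ∈ Set.Ioo (0 : ℝ) 1) (hsum : ∑ i, lam i = 1)
    (ψ : (Fin k → ℝ) → ℝ)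
    (hconv : StrictConvexOn ℝ Set.univ ψ) (hmono : ArgwiseStrictMono ψ)
    (A : Matrix (Fin C) (Fin C) ℝ) (hA : A ∈ AstarSet C)
    (hmin : ∀ B ∈ AstarSet C, S ψ lam A ≤ S ψ lam B)
    (C' : Set (Fin C)) (hC' : ∀ i ∈ C', ∀ j ∈ C', lam i = lam j) :
    ∃ c : ℝ, ∀ i ∈ C', ∀ j ∈ C', i ≠ j → A i j = c := by
  classical
  have hlam' : ∀ i, 0 < lam i := fun i => (hlam i).1
  -- invariance under swaps within C'
  have hswap : ∀ a ∈ C', ∀ b ∈ C', ∀ i j,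
      A i j = A (Equiv.swap a b i) (Equiv.swap a b j) := by
    intro a ha b hb i j
    set σ := Equiv.swap a b
    have hσlam : ∀ i, lam (σ i) = lam i := by
      intro i
      by_cases hia : i = a
      · rw [hia, show σ a = b from Equiv.swap_apply_left a b]; exact hC' b hb a ha
      · by_cases hib : i = b
        · rw [hib, show σ b = a from Equiv.swap_apply_right a b]; exact hC' a ha b hb
        · rw [Equiv.swap_apply_of_ne_of_ne hia hib]
    set B := A.submatrix σ σ with hB
    have hBmem : B ∈ AstarSet C := by
      refine ⟨hA.1.submatrix σ, fun i => ?_⟩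
      simp only [hB, Matrix.submatrix_apply]
      exact hA.2 _
    have hSB : S ψ lam B = S ψ lam A := S_perm ψ lam A σ hσlam
    have hAB : A = B := by
      by_contra hne
      have hmemM : (2:ℝ)⁻¹ • (A + B) ∈ AstarSet C := by
        refine ⟨psd_smul_half (hA.1.add hBmem.1), fun i => ?_⟩
        simp only [Matrix.smul_apply, Matrix.add_apply, hA.2 i, hBmem.2 i, smul_eq_mul]
        norm_num
      have h1 := hmin _ hmemM
      have h2 := midpoint_lt hk lam hlam' ψ hconv A B hne
      rw [hSB] at h2
      linarith
    have := congrFun (congrFun hAB i) j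
    simpa [hB] using this
  -- symmetry of A
  have hsymm : ∀ i j, A i j = A j i := by
    intro i j
    have := hA.1.1.apply j i
    simpa using this
  -- same-row lemma
  have hrow : ∀ i, ∀ j ∈ C', ∀ j' ∈ C', j ≠ i → j' ≠ i → A i j = A i j' := by
    intro i j hj j' hj' hji hj'i
    by_cases hjj : j = j'
    · subst hjj; rfl
    · have := hswap j hj j' hj' i j
      rwa [Equiv.swap_apply_of_ne_of_ne (Ne.symm hji) (Ne.symm hj'i),
        Equiv.swap_apply_left] at this
  by_cases hex : ∃ i₀ ∈ C', ∃ j₀ ∈ C', i₀ ≠ j₀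
  · obtain ⟨i₀, hi₀, j₀, hj₀, hij₀⟩ := hex
    refine ⟨A i₀ j₀, fun i hi j hj hij => ?_⟩
    by_cases hji₀ : j₀ = i
    · subst hji₀
      have h1 : A i₀ j₀ = A j₀ i₀ := hsymm i₀ j₀
      have h2 : A j₀ j = A j₀ i₀ := hrow j₀ j hj i₀ hi₀ hij.symm hij₀
      rw [h2, ← h1]
    · have h1 : A i j = A i j₀ := hrow i j hj j₀ hj₀ hij.symm (Ne.symm hji₀ ∘ Eq.symm) 
      have h2 : A i j₀ = A j₀ i := hsymm i j₀
      have h3 : A j₀ i = A j₀ i₀ := hrow j₀ i hi i₀ hi₀ (fun h => hji₀ h.symm) hij₀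
      have h4 : A j₀ i₀ = A i₀ j₀ := hsymm j₀ i₀
      rw [h1, h2, h3, h4]
  · push_neg at hex
    exact ⟨0, fun i hi j hj hij => absurd (hex i hi j hj) (by simpa using hij)⟩
end

section
/- Let C ≥ 3 and a, b ∈ ℝ, and let A ∈ ℝ^{C×C} be the symmetric matrix with A_{ii} = 1 for all i, A_{1j} = A_{j1} = a for all j ≠ 1, and A_{ij} = b for all distinct i, j ∈ {2,…,C}. Then 1 − b is an eigenvalue of A of multiplicity at least C − 2, and the remaining two eigenvalues of A are ν± = 1 + (C−2)b/2 ± √((C−2)²b²/4 + (C−1)a²). Consequently, if A is positive semidefinite and singular (has 0 as an eigenvalue), then b = 1 or b = ((C−1)a² − 1)/(C−2). -/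
open Matrix

/-- for `C ≥ 3` and the symmetric matrix `A` with unit diagonal,
first-row/column off-diagonal entries `a`, and other off-diagonal entries `b`:
`1 − b` is an eigenvalue of multiplicity at least `C − 2`, the two remaining eigenvalues are
`1 + (C−2)b/2 ± √((C−2)²b²/4 + (C−1)a²)`, and if `A` is PSD and singular then `b = 1` or
`b = ((C−1)a² − 1)/(C−2)`. -/
theorem stmt14 (C : ℕ) (hC : 3 ≤ C) (a b : ℝ)
    (i₀ : Fin C) (hi₀ : (i₀ : ℕ) = 0)
    (A : Matrix (Fin C) (Fin C) ℝ)
    (hA : ∀ i j, A i j = if i = j then 1 else if i = i₀ ∨ j = i₀ then a else b) :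
    (C - 2 ≤ Module.finrank ℝ (Module.End.eigenspace (Matrix.toLin' A) (1 - b))) ∧
    Module.End.HasEigenvalue (Matrix.toLin' A)
      (1 + ((C : ℝ) - 2) * b / 2 +
        Real.sqrt (((C : ℝ) - 2) ^ 2 * b ^ 2 / 4 + ((C : ℝ) - 1) * a ^ 2)) ∧
    Module.End.HasEigenvalue (Matrix.toLin' A)
      (1 + ((C : ℝ) - 2) * b / 2 -
        Real.sqrt (((C : ℝ) - 2) ^ 2 * b ^ 2 / 4 + ((C : ℝ) - 1) * a ^ 2)) ∧
    (A.PosSemidef → (∃ v : Fin C → ℝ, v ≠ 0 ∧ A.mulVec v = 0) →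
      b = 1 ∨ b = (((C : ℝ) - 1) * a ^ 2 - 1) / ((C : ℝ) - 2)) := by
  have hCR : (3:ℝ) ≤ (C:ℝ) := by exact_mod_cast hC
  have h1C : 1 < C := by omega
  set i₁ : Fin C := ⟨1, h1C⟩ with hi₁def
  have hi₁ : i₁ ≠ i₀ := by
    intro h
    have : (i₁ : ℕ) = (i₀ : ℕ) := by rw [h]
    simp [hi₁def, hi₀] at this
  -- the key computation of mulVec
  have key : ∀ v : Fin C → ℝ, ∀ j : Fin C, A.mulVec v j =
      if j = i₀ then v i₀ + a * ((∑ k, v k) - v i₀)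
      else v j + a * v i₀ + b * ((∑ k, v k) - v j - v i₀) := by
    intro v j
    have hmv : A.mulVec v j = ∑ k, A j k * v k := rfl
    by_cases hj : j = i₀
    · have step : ∀ k : Fin C, A j k * v k = a * v k + (if k = j then (1 - a) * v k else 0) := by
        intro k
        rw [hA]
        by_cases hk : j = k
        · rw [if_pos hk, if_pos hk.symm]; ring
        · have hk' : ¬ k = j := fun h => hk h.symm
          rw [if_neg hk, if_pos (Or.inl hj), if_neg hk']
          ring
      rw [hmv, Finset.sum_congr rfl (fun k _ => step k), Finset.sum_add_distrib,
        Finset.sum_ite_eq' Finset.univ j, ← Finset.mul_sum]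
      simp only [Finset.mem_univ, if_true, if_pos hj, hj]
      ring
    · have step : ∀ k : Fin C, A j k * v k =
          b * v k + (if k = j then (1 - b) * v k else 0) + (if k = i₀ then (a - b) * v k else 0) := by
        intro k
        rw [hA]
        by_cases hk : j = k
        · have hk0 : ¬ k = i₀ := by rw [← hk]; exact hj
          rw [if_pos hk, if_pos hk.symm, if_neg hk0]; ring
        · have hk' : ¬ k = j := fun h => hk h.symm
          rw [if_neg hk, if_neg hk']
          by_cases hk0 : k = i₀
          · rw [if_pos (Or.inr hk0), if_pos hk0]; ring
          · rw [if_neg (by tauto : ¬(j = i₀ ∨ k = i₀)), if_neg hk0]; ring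
      rw [hmv, Finset.sum_congr rfl (fun k _ => step k), Finset.sum_add_distrib,
        Finset.sum_add_distrib, Finset.sum_ite_eq' Finset.univ j,
        Finset.sum_ite_eq' Finset.univ i₀, ← Finset.mul_sum]
      simp only [Finset.mem_univ, if_true, if_neg hj]
      ring
  -- sum of an "if" vector
  have sum_ite : ∀ t s : ℝ, (∑ k : Fin C, (if k = i₀ then t else s)) = t + ((C:ℝ) - 1) * s := by
    intro t s
    have step : ∀ k : Fin C, (if k = i₀ then t else s) = s + (if k = i₀ then t - s else 0) := by
      intro k; split <;> ring
    rw [Finset.sum_congr rfl (fun k _ => step k), Finset.sum_add_distrib,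
      Finset.sum_ite_eq' Finset.univ i₀, Finset.sum_const, Finset.card_univ, Fintype.card_fin]
    simp only [Finset.mem_univ, if_true, nsmul_eq_mul]
    ring
  -- a general eigenvalue criterion
  have evalue : ∀ ν : ℝ, (ν - 1) * (ν - 1 - ((C:ℝ) - 2) * b) = ((C:ℝ) - 1) * a ^ 2 →
      Module.End.HasEigenvalue (Matrix.toLin' A) ν := by
    intro ν hν
    by_cases h0 : ν - 1 - ((C:ℝ) - 2) * b = 0 ∧ a = 0
    · obtain ⟨ht0, ha0⟩ := h0
      have hν' : ν = 1 + ((C:ℝ) - 2) * b := by linarith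
      refine Module.End.hasEigenvalue_of_hasEigenvector
        (x := fun k => if k = i₀ then (0:ℝ) else 1) ⟨?_, ?_⟩
      · rw [Module.End.mem_eigenspace_iff, Matrix.toLin'_apply]
        funext j
        simp only [key, Pi.smul_apply, smul_eq_mul]
        rw [sum_ite]
        by_cases hj : j = i₀
        · simp [hj, ha0]
        · simp [hj, hν']
          ring
      · intro h
        have := congrFun h i₁
        simp [hi₁] at this
    · refine Module.End.hasEigenvalue_of_hasEigenvector
        (x := fun k => if k = i₀ then ν - 1 - ((C:ℝ) - 2) * b else a) ⟨?_, ?_⟩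
      · rw [Module.End.mem_eigenspace_iff, Matrix.toLin'_apply]
        funext j
        simp only [key, Pi.smul_apply, smul_eq_mul]
        rw [sum_ite]
        by_cases hj : j = i₀
        · simp [hj]
          linear_combination -hν
        · simp [hj]
          ring
      · intro h
        apply h0
        constructor
        · have := congrFun h i₀; simpa using this
        · have := congrFun h i₁; simpa [hi₁] using this
  have hD : Real.sqrt (((C : ℝ) - 2) ^ 2 * b ^ 2 / 4 + ((C : ℝ) - 1) * a ^ 2) ^ 2
      = ((C : ℝ) - 2) ^ 2 * b ^ 2 / 4 + ((C : ℝ) - 1) * a ^ 2 :=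
    Real.sq_sqrt (by nlinarith [sq_nonneg a, sq_nonneg (((C:ℝ) - 2) * b)])
  refine ⟨?_, ?_, ?_, ?_⟩
  · -- multiplicity of 1 - b
    set E := Module.End.eigenspace (Matrix.toLin' A) (1 - b) with hE
    set w : {i : Fin C // i ≠ i₀ ∧ i ≠ i₁} → (Fin C → ℝ) :=
      fun i k => (if k = (i : Fin C) then 1 else 0) - (if k = i₁ then 1 else 0) with hw
    have hsum : ∀ i, (∑ k, w i k) = 0 := by
      intro i
      simp only [hw, Finset.sum_sub_distrib, Finset.sum_ite_eq' Finset.univ]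
      simp
    have hw0 : ∀ i, w i i₀ = 0 := by
      intro i
      simp only [hw]
      rw [if_neg (fun h => i.2.1 h.symm), if_neg (fun h => hi₁ h.symm)]
      ring
    have hmem : ∀ i, w i ∈ E := by
      intro i
      rw [hE, Module.End.mem_eigenspace_iff, Matrix.toLin'_apply]
      funext j
      rw [key, hsum i, hw0 i]
      by_cases hj : j = i₀
      · simp [hj, hw0 i]
      · simp only [if_neg hj, Pi.smul_apply, smul_eq_mul]
        ring
    have hindep : LinearIndependent ℝ w := by
      rw [Fintype.linearIndependent_iff]
      intro g hg i
      have h1 := congrFun hg (i : Fin C)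
      simp only [Finset.sum_apply, Pi.smul_apply, smul_eq_mul, hw, Pi.zero_apply] at h1
      have h2 : ∀ i' : {i : Fin C // i ≠ i₀ ∧ i ≠ i₁},
          g i' * ((if (i : Fin C) = (i' : Fin C) then (1:ℝ) else 0) -
            (if (i : Fin C) = i₁ then 1 else 0))
          = if i' = i then g i' else 0 := by
        intro i'
        rw [if_neg (fun h => i.2.2 h)]
        by_cases h : i' = i
        · rw [if_pos h, if_pos (by rw [h])]
          ring
        · rw [if_neg h, if_neg (fun hh => h (Subtype.ext hh.symm))]
          ring
      rw [Finset.sum_congr rfl (fun i' _ => h2 i'), Finset.sum_ite_eq' Finset.univ i] at h1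
      simpa using h1
    have hindep' : LinearIndependent ℝ (fun i => (⟨w i, hmem i⟩ : E)) :=
      LinearIndependent.of_comp E.subtype (by exact hindep)
    have hcard := hindep'.fintype_card_le_finrank
    have hcount : Fintype.card {i : Fin C // i ≠ i₀ ∧ i ≠ i₁} = C - 2 := by
      have hset : (Finset.univ.filter fun i : Fin C => i ≠ i₀ ∧ i ≠ i₁)
          = (Finset.univ \ {i₀, i₁} : Finset (Fin C)) := by
        ext k
        simp [not_or, and_comm]
      rw [Fintype.card_subtype, hset, Finset.card_sdiff_of_subset (by simp),
        Finset.card_pair (Ne.symm hi₁), Finset.card_univ, Fintype.card_fin]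
    omega
  · exact evalue _ (by linear_combination hD)
  · exact evalue _ (by linear_combination hD)
  · -- singular case
    rintro _ ⟨v, hv0, hAv⟩
    by_cases hb : b = 1
    · exact Or.inl hb
    right
    have hb' : (1:ℝ) - b ≠ 0 := fun h => hb (by linarith)
    have row : ∀ j : Fin C, j ≠ i₀ →
        v j + a * v i₀ + b * ((∑ k, v k) - v j - v i₀) = 0 := by
      intro j hj
      have := congrFun hAv j
      rw [key] at this
      simpa [hj] using this
    have row0 : v i₀ + a * ((∑ k, v k) - v i₀) = 0 := by
      have := congrFun hAv i₀
      rw [key] at this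
      simpa using this
    have hconst : ∀ j : Fin C, j ≠ i₀ → v j = v i₁ := by
      intro j hj
      have h1 := row j hj
      have h2 := row i₁ hi₁
      have : (1 - b) * v j = (1 - b) * v i₁ := by linear_combination h1 - h2
      exact mul_left_cancel₀ hb' this
    have hT : (∑ k, v k) = v i₀ + ((C:ℝ) - 1) * v i₁ := by
      rw [show (∑ k, v k) = ∑ k : Fin C, (if k = i₀ then v i₀ else v i₁) from
        Finset.sum_congr rfl (fun k _ => by
          by_cases hk : k = i₀
          · simp [hk]
          · simp [hk, hconst k hk]), sum_ite]
    rw [hT] at row row0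
    have hs : v i₁ ≠ 0 := by
      intro hs0
      apply hv0
      have ht0 : v i₀ = 0 := by
        rw [hs0] at row0
        linear_combination row0
      funext k
      by_cases hk : k = i₀
      · rw [hk]; exact ht0
      · rw [hconst k hk, hs0]; rfl
    have hrow1 := row i₁ hi₁
    have ht' : v i₀ = -(((C:ℝ) - 1) * a * v i₁) := by linear_combination row0
    have hkey : v i₁ * (1 + ((C:ℝ) - 2) * b - ((C:ℝ) - 1) * a ^ 2) = 0 := by
      rw [ht'] at hrow1
      linear_combination hrow1
    have hfin : 1 + ((C:ℝ) - 2) * b - ((C:ℝ) - 1) * a ^ 2 = 0 :=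
      (mul_eq_zero.mp hkey).resolve_left hs
    have hC2 : ((C:ℝ) - 2) ≠ 0 := by intro h; nlinarith
    rw [eq_div_iff hC2]
    linear_combination hfin
end

section
/- Let k ≥ 1 and let ψ : ℝ^k → ℝ be convex and argument-wise strictly increasing. Let u ∈ ℝ^k have all components nonnegative with u ≠ 0. Then there exists δ > 0 such that for all t, t' ∈ [−2, 0] with t' ≤ t: (t − t')·δ ≤ ψ(t·u) − ψ(t'·u). -/
lemma aux_update_le {k : ℕ} (ψ : (Fin k → ℝ) → ℝ) (hmono : ArgwiseStrictMono ψ)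
    (i : Fin k) (t : Fin k → ℝ) {s s' : ℝ} (h : s ≤ s') :
    ψ (Function.update t i s) ≤ ψ (Function.update t i s') := by
  rcases eq_or_lt_of_le h with rfl | h
  · exact le_refl _
  · exact (hmono i t _ _ h).le

lemma aux_psi_mono {k : ℕ} (ψ : (Fin k → ℝ) → ℝ) (hmono : ArgwiseStrictMono ψ)
    {x y : Fin k → ℝ} (h : x ≤ y) : ψ x ≤ ψ y := by
  have key : ∀ s : Finset (Fin k), ψ x ≤ ψ (fun i => if i ∈ s then y i else x i) := by
    intro s
    induction s using Finset.induction with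
    | empty => simp
    | @insert j s hj ih =>
      refine ih.trans ?_
      have h1 : (fun i => if i ∈ insert j s then y i else x i)
          = Function.update (fun i => if i ∈ s then y i else x i) j (y j) := by
        funext i
        rcases eq_or_ne i j with rfl | hij
        · simp
        · simp [Function.update_of_ne hij, Finset.mem_insert, hij]
      have h2 : (fun i => if i ∈ s then y i else x i)
          = Function.update (fun i => if i ∈ s then y i else x i) j (x j) := by
        funext i
        rcases eq_or_ne i j with rfl | hij
        · simp [hj]
        · simp [Function.update_of_ne hij]
      have := aux_update_le ψ hmono j (fun i => if i ∈ s then y i else x i) (h j)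
      rw [← h2, ← h1] at this
      exact this
  simpa using key Finset.univ

lemma aux_g_strictmono {k : ℕ} (ψ : (Fin k → ℝ) → ℝ) (hmono : ArgwiseStrictMono ψ)
    (u : Fin k → ℝ) (hu : ∀ i, 0 ≤ u i) (hu0 : u ≠ 0)
    {s s' : ℝ} (h : s < s') : ψ (s • u) < ψ (s' • u) := by
  obtain ⟨i₀, hi₀⟩ : ∃ i, u i ≠ 0 := Function.ne_iff.mp hu0
  have hui : 0 < u i₀ := lt_of_le_of_ne (hu i₀) (Ne.symm hi₀)
  have hle : (s • u) ≤ Function.update (s' • u) i₀ (s * u i₀) := by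
    intro i
    rcases eq_or_ne i i₀ with rfl | hij
    · simp
    · simp only [Function.update_of_ne hij, Pi.smul_apply, smul_eq_mul]
      exact mul_le_mul_of_nonneg_right h.le (hu i)
  have h1 : ψ (s • u) ≤ ψ (Function.update (s' • u) i₀ (s * u i₀)) :=
    aux_psi_mono ψ hmono hle
  have h2 : ψ (Function.update (s' • u) i₀ (s * u i₀))
      < ψ (Function.update (s' • u) i₀ (s' * u i₀)) :=
    hmono i₀ _ _ _ (by exact mul_lt_mul_of_pos_right h hui)
  have h3 : Function.update (s' • u) i₀ (s' * u i₀) = s' • u := by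
    rw [show s' * u i₀ = (s' • u) i₀ by simp, Function.update_eq_self]
  rw [h3] at h2
  exact h1.trans_lt h2

/-- for `ψ : ℝ^k → ℝ` convex and argument-wise strictly increasing and
`u ≥ 0`, `u ≠ 0`, there is `δ > 0` with `(t − t')·δ ≤ ψ(t·u) − ψ(t'·u)` for all
`t' ≤ t` in `[−2, 0]`. -/
theorem stmt15 (k : ℕ) (hk : 1 ≤ k) (ψ : (Fin k → ℝ) → ℝ)
    (hconv : ConvexOn ℝ Set.univ ψ) (hmono : ArgwiseStrictMono ψ)
    (u : Fin k → ℝ) (hu : ∀ i, 0 ≤ u i) (hu0 : u ≠ 0) :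
    ∃ δ > (0 : ℝ), ∀ t t' : ℝ, t ∈ Set.Icc (-2 : ℝ) 0 → t' ∈ Set.Icc (-2 : ℝ) 0 →
      t' ≤ t → (t - t') * δ ≤ ψ (t • u) - ψ (t' • u) := by
  set g : ℝ → ℝ := fun t => ψ (t • u) with hg_def
  have hg : ConvexOn ℝ Set.univ g := by
    have := hconv.comp_affineMap (LinearMap.toSpanSingleton ℝ (Fin k → ℝ) u).toAffineMap
    simpa [Function.comp_def, hg_def, LinearMap.toSpanSingleton_apply] using this
  set δ : ℝ := g (-2) - g (-3) with hδ_def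
  have hδpos : 0 < δ := by
    have := aux_g_strictmono ψ hmono u hu hu0 (show (-3:ℝ) < -2 by norm_num)
    simpa [hδ_def, hg_def] using sub_pos.mpr this
  refine ⟨δ, hδpos, fun t t' ht ht' htt' => ?_⟩
  rcases eq_or_lt_of_le htt' with rfl | hlt
  · simp
  have h1 : (g (-2) - g (-3)) / ((-2) - (-3)) ≤ (g t' - g (-3)) / (t' - (-3)) :=
    hg.secant_mono trivial trivial trivial (by norm_num) (by linarith [ht'.1]) (by linarith [ht'.1])
  have h2 : (g t' - g (-3)) / (t' - (-3)) ≤ (g t - g t') / (t - t') :=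
    hg.slope_mono_adjacent trivial trivial (by linarith [ht'.1]) hlt
  have h3 : δ ≤ (g t - g t') / (t - t') := by
    have : (g (-2) - g (-3)) / ((-2) - (-3)) = δ := by norm_num [hδ_def]
    linarith
  have ht0 : 0 < t - t' := sub_pos.mpr hlt
  calc (t - t') * δ ≤ (t - t') * ((g t - g t') / (t - t')) := by
        exact mul_le_mul_of_nonneg_left h3 ht0.le
    _ = g t - g t' := by field_simp
end

section
/- Let k ≥ 1, C ≥ 3, and let the class probabilities satisfy 1 > λ₁ > λ₂ = … = λ_C = (1−λ₁)/(C−1) > 0. Let ψ : ℝ^k → ℝ be strictly convex and argument-wise strictly increasing, let γ_C := 2(C−1)/(C−2), and suppose Δ₂ > 0 satisfies |ψ(v) − ψ(v')| ≤ Δ₂·‖v − v'‖₂ for all v, v' ∈ [−2,0]^k, and δ_𝟙 > 0 satisfies (t − t')·δ_𝟙 ≤ ψ(t·𝟙) − ψ(t'·𝟙) for all t' ≤ t in [−2,0], where 𝟙 = (1,…,1) ∈ ℝ^k. If λ₁ ≥ 1/(1 + δ_𝟙/(γ_C·√k·Δ₂)), then the function a ↦ S_SCL(A*(a)) is strictly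 increasing on [−1,1]: for all −1 ≤ a' < a ≤ 1, S_SCL(A*(a')) < S_SCL(A*(a)); in particular it is minimized over [−1,1] only at a = −1, at which A*(−1) has all first-row/column off-diagonal entries equal to −1 and all other off-diagonal entries equal to 1, so any M ∈ ℝ^{d×C} with unit-norm columns μ₁,…,μ_C and MᵀM = A*(−1) satisfies μᵢ = −μ₁ for all i ≠ 1 (minority collapse in the SCL setting). -/
open Matrix

/-- The supervised contrastive objective
`S_SCL(A) = ∑ᵢ λᵢ ∑_{j₁,…,j_k ≠ i} ∏ₜ (λ_{jₜ}/(1−λᵢ)) ψ(A_{i j₁}−1, …, A_{i j_k}−1)`. -/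
noncomputable def SSCL {k C : ℕ} (ψ : (Fin k → ℝ) → ℝ) (lam : Fin C → ℝ)
    (A : Matrix (Fin C) (Fin C) ℝ) : ℝ :=
  ∑ i : Fin C, lam i *
    ∑ j ∈ Finset.univ.filter (fun j : Fin k → Fin C => ∀ t, j t ≠ i),
      (∏ t, lam (j t) / (1 - lam i)) * ψ (fun t => A i (j t) - 1)

/-- The one-parameter family `A*(a)`: unit diagonal, first-row/first-column off-diagonal
entries `a`, all other off-diagonal entries `b(a) = ((C−1)a² − 1)/(C−2)`. -/
noncomputable def AstarMat (C : ℕ) (a : ℝ) : Matrix (Fin C) (Fin C) ℝ :=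
  Matrix.of fun i j =>
    if i = j then 1
    else if (i : ℕ) = 0 ∨ (j : ℕ) = 0 then a
    else (((C : ℝ) - 1) * a ^ 2 - 1) / ((C : ℝ) - 2)

lemma weight_sum {k C : ℕ} (lam : Fin C → ℝ) (i : Fin C) (h : 1 - lam i ≠ 0)
    (hsum : ∑ x ∈ Finset.univ.filter (· ≠ i), lam x = 1 - lam i) :
    ∑ j ∈ Finset.univ.filter (fun j : Fin k → Fin C => ∀ t, j t ≠ i),
      ∏ t, lam (j t) / (1 - lam i) = 1 := by
  have hset : Finset.univ.filter (fun j : Fin k → Fin C => ∀ t, j t ≠ i)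
      = Fintype.piFinset (fun _ : Fin k => Finset.univ.filter (· ≠ i)) := by
    ext j; simp [Fintype.mem_piFinset]
  have hps := Finset.prod_univ_sum (t := fun _ : Fin k => Finset.univ.filter (· ≠ i))
    (f := fun _ x => lam x / (1 - lam i))
  rw [hset, ← hps]
  have h1 : ∀ t : Fin k, ∑ x ∈ Finset.univ.filter (· ≠ i), lam x / (1 - lam i) = 1 := by
    intro t
    rw [← Finset.sum_div, hsum, div_self h]
  rw [Finset.prod_congr rfl (fun t _ => h1 t), Finset.prod_const_one]


set_option maxHeartbeats 1000000 in
lemma scl_inc (k C : ℕ) (hk : 1 ≤ k) (hC : 3 ≤ C)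
    (i₀ : Fin C) (hi₀ : (i₀ : ℕ) = 0)
    (lam : Fin C → ℝ)
    (hlt1 : lam i₀ < 1)
    (hminor : ∀ i : Fin C, i ≠ i₀ → lam i = (1 - lam i₀) / ((C : ℝ) - 1))
    (hmaj : (1 - lam i₀) / ((C : ℝ) - 1) < lam i₀)
    (hpos : 0 < (1 - lam i₀) / ((C : ℝ) - 1))
    (ψ : (Fin k → ℝ) → ℝ)
    (Δ₂ : ℝ) (hΔpos : 0 < Δ₂)
    (hΔ : ∀ v v' : Fin k → ℝ, (∀ i, v i ∈ Set.Icc (-2 : ℝ) 0) →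
      (∀ i, v' i ∈ Set.Icc (-2 : ℝ) 0) →
      |ψ v - ψ v'| ≤ Δ₂ * Real.sqrt (∑ i, (v i - v' i) ^ 2))
    (δone : ℝ) (hδpos : 0 < δone)
    (hδ : ∀ t t' : ℝ, t ∈ Set.Icc (-2 : ℝ) 0 → t' ∈ Set.Icc (-2 : ℝ) 0 → t' ≤ t →
      (t - t') * δone ≤ ψ (t • (fun _ : Fin k => (1 : ℝ)))
                        - ψ (t' • (fun _ : Fin k => (1 : ℝ))))
    (hlam1 : 1 / (1 + δone / ((2 * ((C : ℝ) - 1) / ((C : ℝ) - 2)) * Real.sqrt k * Δ₂))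
              ≤ lam i₀)
    (a a' : ℝ) (ha1 : -1 ≤ a') (haa : a' < a) (ha2 : a ≤ 1) :
    SSCL ψ lam (AstarMat C a') < SSCL ψ lam (AstarMat C a) := by
  have hc : (3:ℝ) ≤ (C:ℝ) := by exact_mod_cast hC
  set γ : ℝ := 2 * ((C:ℝ) - 1) / ((C:ℝ) - 2) with hγdef
  have hc2 : (0:ℝ) < (C:ℝ) - 2 := by linarith
  have hγ2 : (2:ℝ) ≤ γ := by rw [hγdef, le_div_iff₀ hc2]; linarith
  have hγpos : (0:ℝ) < γ := by linarith
  have hkpos : (0:ℝ) < (k:ℝ) := by exact_mod_cast Nat.pos_of_ne_zero (by omega)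
  have hsk : 0 < Real.sqrt k := Real.sqrt_pos.mpr hkpos
  have hΔa : 0 < a - a' := by linarith
  have hl0 : 0 < lam i₀ := lt_trans hpos hmaj
  have hlampos : ∀ i, 0 < lam i := by
    intro i; by_cases h : i = i₀
    · subst h; exact hl0
    · rw [hminor i h]; exact hpos
  have h1l : ∀ i, 0 < 1 - lam i := by
    intro i; by_cases h : i = i₀
    · subst h; linarith
    · rw [hminor i h]
      have : (1 - lam i₀) / ((C:ℝ) - 1) < 1 := by
        rw [div_lt_one (by linarith)]; linarith
      linarith
  have htot : ∑ x, lam x = 1 := by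
    have hcard : (Finset.univ.erase i₀).card = C - 1 := by
      rw [Finset.card_erase_of_mem (Finset.mem_univ i₀), Finset.card_univ, Fintype.card_fin]
    have hrest : ∑ x ∈ Finset.univ.erase i₀, lam x
        = ((C:ℝ) - 1) * ((1 - lam i₀) / ((C:ℝ) - 1)) := by
      rw [Finset.sum_congr rfl (fun x hx => hminor x (Finset.ne_of_mem_erase hx)),
        Finset.sum_const, hcard, nsmul_eq_mul]
      congr 1
      push_cast [Nat.cast_sub (by omega : 1 ≤ C)]
      ring
    have he : ((C:ℝ) - 1) * ((1 - lam i₀) / ((C:ℝ) - 1)) = 1 - lam i₀ := by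
      rw [mul_div_assoc', mul_comm, mul_div_assoc, div_self (ne_of_gt (by linarith : (0:ℝ) < (C:ℝ) - 1)), mul_one]
    rw [← Finset.add_sum_erase _ _ (Finset.mem_univ i₀), hrest, he]
    ring
  have hfil : ∀ i, ∑ x ∈ Finset.univ.filter (· ≠ i), lam x = 1 - lam i := by
    intro i
    have hset : Finset.univ.filter (· ≠ i) = Finset.univ.erase i := by
      ext x; simp [Finset.mem_erase]
    rw [hset, Finset.sum_erase_eq_sub (Finset.mem_univ i), htot]
  -- entries lie in [-2,0]
  have hb_le : ∀ x:ℝ, -1 ≤ x → x ≤ 1 →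
      -1 ≤ (((C:ℝ)-1)*x^2 - 1)/((C:ℝ)-2) ∧ (((C:ℝ)-1)*x^2 - 1)/((C:ℝ)-2) ≤ 1 := by
    intro x h1 h2
    have hx2 : x^2 ≤ 1 := by nlinarith
    constructor
    · rw [le_div_iff₀ hc2]; nlinarith [sq_nonneg x]
    · rw [div_le_iff₀ hc2]; nlinarith
  have hmemIcc : ∀ x:ℝ, -1 ≤ x → x ≤ 1 → ∀ (i jt : Fin C), jt ≠ i →
      AstarMat C x i jt - 1 ∈ Set.Icc (-2:ℝ) 0 := by
    intro x h1 h2 i jt hne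
    simp only [AstarMat, Matrix.of_apply]
    rw [if_neg (fun h => hne h.symm)]
    split_ifs with h
    · exact ⟨by linarith, by linarith⟩
    · obtain ⟨hb1, hb2⟩ := hb_le x h1 h2
      exact ⟨by linarith, by linarith⟩
  -- entry differences
  have hdiff : ∀ (i jt : Fin C), jt ≠ i →
      (AstarMat C a i jt - 1) - (AstarMat C a' i jt - 1) = a - a' ∨
      (AstarMat C a i jt - 1) - (AstarMat C a' i jt - 1)
        = ((C:ℝ)-1)/((C:ℝ)-2) * ((a+a')*(a-a')) := by
    intro i jt hne
    simp only [AstarMat, Matrix.of_apply, if_neg (fun h : i = jt => hne h.symm)]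
    split_ifs with h
    · left; ring
    · right
      field_simp
      ring
  have hsqlt : ∀ (i jt : Fin C), jt ≠ i →
      ((AstarMat C a i jt - 1) - (AstarMat C a' i jt - 1))^2 < (γ * (a - a'))^2 := by
    intro i jt hne
    rcases hdiff i jt hne with h | h <;> rw [h]
    · nlinarith [mul_pos hΔa hΔa, mul_le_mul hγ2 hγ2 (by norm_num) (by linarith)]
    · have h4 : (a+a')^2 < 4 := by
        nlinarith [mul_pos (show (0:ℝ) < 2-(a+a') by linarith)
          (show (0:ℝ) < 2+(a+a') by linarith)]
      have hr : (0:ℝ) < ((C:ℝ)-1)/((C:ℝ)-2) := div_pos (by linarith) hc2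
      have hγr : γ = 2 * (((C:ℝ)-1)/((C:ℝ)-2)) := by rw [hγdef]; ring
      have hq : 0 < (((C:ℝ)-1)/((C:ℝ)-2))^2 * (a-a')^2 :=
        mul_pos (pow_pos hr 2) (pow_pos hΔa 2)
      rw [hγr]
      calc (((C:ℝ)-1)/((C:ℝ)-2) * ((a+a')*(a-a')))^2
          = (a+a')^2 * ((((C:ℝ)-1)/((C:ℝ)-2))^2 * (a-a')^2) := by ring
        _ < 4 * ((((C:ℝ)-1)/((C:ℝ)-2))^2 * (a-a')^2) := mul_lt_mul_of_pos_right h4 hq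
        _ = (2 * (((C:ℝ)-1)/((C:ℝ)-2)) * (a-a'))^2 := by ring
  set B : ℝ := Δ₂ * (Real.sqrt k * (γ * (a - a'))) with hB
  have hBpos : 0 < B := by
    rw [hB]; exact mul_pos hΔpos (mul_pos hsk (mul_pos hγpos hΔa))
  -- minor-row per-term bound
  have hminorterm : ∀ (i : Fin C) (j : Fin k → Fin C), (∀ t, j t ≠ i) →
      -B < ψ (fun t => AstarMat C a i (j t) - 1) - ψ (fun t => AstarMat C a' i (j t) - 1) := by
    intro i j hj
    set v : Fin k → ℝ := fun t => AstarMat C a i (j t) - 1 with hv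
    set v' : Fin k → ℝ := fun t => AstarMat C a' i (j t) - 1 with hv'
    have hm1 : ∀ t, v t ∈ Set.Icc (-2:ℝ) 0 := fun t =>
      hmemIcc a (by linarith) ha2 i (j t) (hj t)
    have hm2 : ∀ t, v' t ∈ Set.Icc (-2:ℝ) 0 := fun t =>
      hmemIcc a' ha1 (by linarith) i (j t) (hj t)
    have habs := hΔ v v' hm1 hm2
    have hsum : ∑ t, (v t - v' t)^2 < (k:ℝ) * (γ*(a-a'))^2 := by
      haveI : NeZero k := ⟨by omega⟩
      calc ∑ t, (v t - v' t)^2 < ∑ _t : Fin k, (γ*(a-a'))^2 :=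
            Finset.sum_lt_sum_of_nonempty Finset.univ_nonempty
              (fun t _ => hsqlt i (j t) (hj t))
        _ = (k:ℝ) * (γ*(a-a'))^2 := by
            rw [Finset.sum_const, Finset.card_univ, Fintype.card_fin, nsmul_eq_mul]
    have hsq : Real.sqrt (∑ t, (v t - v' t)^2) < Real.sqrt k * (γ*(a-a')) := by
      have h1 : Real.sqrt (∑ t, (v t - v' t)^2) < Real.sqrt ((k:ℝ) * (γ*(a-a'))^2) :=
        Real.sqrt_lt_sqrt (Finset.sum_nonneg fun t _ => sq_nonneg _) hsum
      rwa [Real.sqrt_mul hkpos.le, Real.sqrt_sq (by positivity)] at h1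
    have hlt : |ψ v - ψ v'| < B :=
      lt_of_le_of_lt habs (by rw [hB]; exact mul_lt_mul_of_pos_left hsq hΔpos)
    have := abs_lt.mp hlt
    linarith [this.1]
  -- major-row per-term bound
  have hmajorterm : ∀ (j : Fin k → Fin C), (∀ t, j t ≠ i₀) →
      (a - a') * δone ≤ ψ (fun t => AstarMat C a i₀ (j t) - 1)
        - ψ (fun t => AstarMat C a' i₀ (j t) - 1) := by
    intro j hj
    have he : ∀ x:ℝ, (fun t => AstarMat C x i₀ (j t) - 1)
        = (x - 1) • (fun _ : Fin k => (1:ℝ)) := by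
      intro x; funext t
      simp only [AstarMat, Matrix.of_apply, Pi.smul_apply, smul_eq_mul, mul_one]
      rw [if_neg (fun h => hj t h.symm), if_pos (Or.inl hi₀)]
    rw [he a, he a']
    have h := hδ (a-1) (a'-1) ⟨by linarith, by linarith⟩ ⟨by linarith, by linarith⟩
      (by linarith)
    rw [show (a-1) - (a'-1) = a - a' from by ring] at h
    exact h
  -- weights
  have hW : ∀ i : Fin C, ∑ j ∈ Finset.univ.filter (fun j : Fin k → Fin C => ∀ t, j t ≠ i),
      ∏ t, lam (j t) / (1 - lam i) = 1 :=
    fun i => weight_sum lam i (ne_of_gt (h1l i)) (hfil i)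
  have hwpos : ∀ (i : Fin C) (j : Fin k → Fin C), 0 < ∏ t, lam (j t) / (1 - lam i) :=
    fun i j => Finset.prod_pos fun t _ => div_pos (hlampos _) (h1l i)
  -- difference of objectives
  rw [← sub_pos]
  have hdiffS : SSCL ψ lam (AstarMat C a) - SSCL ψ lam (AstarMat C a') =
      ∑ i : Fin C, lam i *
        ∑ j ∈ Finset.univ.filter (fun j : Fin k → Fin C => ∀ t, j t ≠ i),
          (∏ t, lam (j t) / (1 - lam i)) *
            (ψ (fun t => AstarMat C a i (j t) - 1)
              - ψ (fun t => AstarMat C a' i (j t) - 1)) := by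
    unfold SSCL
    rw [← Finset.sum_sub_distrib]
    refine Finset.sum_congr rfl fun i _ => ?_
    rw [← mul_sub, ← Finset.sum_sub_distrib]
    congr 1
    refine Finset.sum_congr rfl fun j _ => ?_
    rw [mul_sub]
  rw [hdiffS, ← Finset.add_sum_erase _ _ (Finset.mem_univ i₀)]
  -- bound the i₀ term
  have hmajbound : lam i₀ * ((a - a') * δone) ≤ lam i₀ *
      ∑ j ∈ Finset.univ.filter (fun j : Fin k → Fin C => ∀ t, j t ≠ i₀),
        (∏ t, lam (j t) / (1 - lam i₀)) *
          (ψ (fun t => AstarMat C a i₀ (j t) - 1)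
            - ψ (fun t => AstarMat C a' i₀ (j t) - 1)) := by
    refine mul_le_mul_of_nonneg_left ?_ hl0.le
    calc (a - a') * δone
        = (∑ j ∈ Finset.univ.filter (fun j : Fin k → Fin C => ∀ t, j t ≠ i₀),
            ∏ t, lam (j t) / (1 - lam i₀)) * ((a - a') * δone) := by rw [hW i₀, one_mul]
      _ = ∑ j ∈ Finset.univ.filter (fun j : Fin k → Fin C => ∀ t, j t ≠ i₀),
            (∏ t, lam (j t) / (1 - lam i₀)) * ((a - a') * δone) := Finset.sum_mul _ _ _
      _ ≤ _ := by
          refine Finset.sum_le_sum fun j hj => ?_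
          exact mul_le_mul_of_nonneg_left
            (hmajorterm j (Finset.mem_filter.mp hj).2) (hwpos i₀ j).le
  -- bound the minority terms
  haveI : Nontrivial (Fin C) := Fin.nontrivial_iff_two_le.mpr (by omega)
  have hminbound : ∀ i ∈ Finset.univ.erase i₀, lam i * (-B) < lam i *
      ∑ j ∈ Finset.univ.filter (fun j : Fin k → Fin C => ∀ t, j t ≠ i),
        (∏ t, lam (j t) / (1 - lam i)) *
          (ψ (fun t => AstarMat C a i (j t) - 1)
            - ψ (fun t => AstarMat C a' i (j t) - 1)) := by
    intro i _
    refine mul_lt_mul_of_pos_left ?_ (hlampos i)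
    have hFne : (Finset.univ.filter (fun j : Fin k → Fin C => ∀ t, j t ≠ i)).Nonempty := by
      obtain ⟨x, hx⟩ := exists_ne i
      exact ⟨fun _ => x, by simp [hx]⟩
    calc -B = (∑ j ∈ Finset.univ.filter (fun j : Fin k → Fin C => ∀ t, j t ≠ i),
            ∏ t, lam (j t) / (1 - lam i)) * (-B) := by rw [hW i, one_mul]
      _ = ∑ j ∈ Finset.univ.filter (fun j : Fin k → Fin C => ∀ t, j t ≠ i),
            (∏ t, lam (j t) / (1 - lam i)) * (-B) := Finset.sum_mul _ _ _
      _ < _ := by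
          refine Finset.sum_lt_sum_of_nonempty hFne fun j hj => ?_
          exact mul_lt_mul_of_pos_left
            (hminorterm i j (Finset.mem_filter.mp hj).2) (hwpos i j)
  have hErne : (Finset.univ.erase i₀).Nonempty := by
    obtain ⟨x, hx⟩ := exists_ne i₀
    exact ⟨x, Finset.mem_erase.mpr ⟨hx, Finset.mem_univ x⟩⟩
  have hrest : ∑ i ∈ Finset.univ.erase i₀, lam i * (-B) <
      ∑ i ∈ Finset.univ.erase i₀, lam i *
        ∑ j ∈ Finset.univ.filter (fun j : Fin k → Fin C => ∀ t, j t ≠ i),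
          (∏ t, lam (j t) / (1 - lam i)) *
            (ψ (fun t => AstarMat C a i (j t) - 1)
              - ψ (fun t => AstarMat C a' i (j t) - 1)) :=
    Finset.sum_lt_sum_of_nonempty hErne hminbound
  have hsum_erase : ∑ i ∈ Finset.univ.erase i₀, lam i * (-B) = -(1 - lam i₀) * B := by
    rw [← Finset.sum_mul, Finset.sum_erase_eq_sub (Finset.mem_univ i₀), htot]
    ring
  -- final numeric inequality
  have hD : 0 < γ * Real.sqrt k * Δ₂ := mul_pos (mul_pos hγpos hsk) hΔpos
  have hkey : (1 - lam i₀) * (γ * Real.sqrt k * Δ₂) ≤ lam i₀ * δone := by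
    have hdenom : 0 < 1 + δone / (γ * Real.sqrt k * Δ₂) := by
      have := div_pos hδpos hD; linarith
    rw [div_le_iff₀ hdenom] at hlam1
    have h2 : δone / (γ * Real.sqrt k * Δ₂) * (γ * Real.sqrt k * Δ₂) = δone :=
      div_mul_cancel₀ _ (ne_of_gt hD)
    nlinarith [hlam1, hD]
  have hfin : 0 ≤ lam i₀ * ((a - a') * δone) - (1 - lam i₀) * B := by
    have hBe : B = (γ * Real.sqrt k * Δ₂) * (a - a') := by rw [hB]; ring
    rw [hBe]
    nlinarith [hkey, hΔa]
  rw [hsum_erase] at hrest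
  linarith [hmajbound, hrest, hfin]

/-- Minority collapse from the Gram condition. -/
lemma collapse {d C : ℕ} (hC : 3 ≤ C) (i₀ : Fin C) (hi₀ : (i₀ : ℕ) = 0)
    (M : Matrix (Fin d) (Fin C) ℝ)
    (hcol : ∀ j, ∑ r, (M r j) ^ 2 = 1) (hMM : Mᵀ * M = AstarMat C (-1))
    (i : Fin C) (hi : i ≠ i₀) (r : Fin d) : M r i = - M r i₀ := by
  have h1 : ∑ x, M x i₀ * M x i = -1 := by
    have := congrFun (congrFun hMM i₀) i
    rw [Matrix.mul_apply] at this
    simp only [Matrix.transpose_apply] at this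
    rw [this]
    simp only [AstarMat, Matrix.of_apply]
    rw [if_neg (fun h => hi h.symm), if_pos (Or.inl hi₀)]
  have hz : ∑ x, (M x i + M x i₀) ^ 2 = 0 := by
    have e : ∀ x, (M x i + M x i₀) ^ 2 = (M x i)^2 + (M x i₀)^2 + 2 * (M x i₀ * M x i) := by
      intro x; ring
    rw [Finset.sum_congr rfl (fun x _ => e x), Finset.sum_add_distrib,
      Finset.sum_add_distrib, ← Finset.mul_sum, hcol i, hcol i₀, h1]
    ring
  have := (Finset.sum_eq_zero_iff_of_nonneg (fun x _ => sq_nonneg (M x i + M x i₀))).mp hz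
    r (Finset.mem_univ r)
  have := pow_eq_zero_iff (n := 2) (by norm_num) |>.mp this
  linarith


/-- minority collapse, SCL setting: under the stated hypotheses on `λ`, `ψ`,
`Δ₂`, `δ_𝟙` and the threshold condition on `λ₁`, the map `a ↦ S_SCL(A*(a))` is strictly
increasing on `[−1,1]`, hence minimized only at `a = −1`, and any unit-column `M` with
`MᵀM = A*(−1)` exhibits minority collapse: `μᵢ = −μ₁` for all `i ≠ 1`. -/
theorem stmt18 (k C : ℕ) (hk : 1 ≤ k) (hC : 3 ≤ C)
    (i₀ : Fin C) (hi₀ : (i₀ : ℕ) = 0)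
    (lam : Fin C → ℝ)
    (hlt1 : lam i₀ < 1)
    (hminor : ∀ i : Fin C, i ≠ i₀ → lam i = (1 - lam i₀) / ((C : ℝ) - 1))
    (hmaj : (1 - lam i₀) / ((C : ℝ) - 1) < lam i₀)
    (hpos : 0 < (1 - lam i₀) / ((C : ℝ) - 1))
    (ψ : (Fin k → ℝ) → ℝ)
    (hconv : StrictConvexOn ℝ Set.univ ψ) (hmono : ArgwiseStrictMono ψ)
    (Δ₂ : ℝ) (hΔpos : 0 < Δ₂)
    (hΔ : ∀ v v' : Fin k → ℝ, (∀ i, v i ∈ Set.Icc (-2 : ℝ) 0) →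
      (∀ i, v' i ∈ Set.Icc (-2 : ℝ) 0) →
      |ψ v - ψ v'| ≤ Δ₂ * Real.sqrt (∑ i, (v i - v' i) ^ 2))
    (δone : ℝ) (hδpos : 0 < δone)
    (hδ : ∀ t t' : ℝ, t ∈ Set.Icc (-2 : ℝ) 0 → t' ∈ Set.Icc (-2 : ℝ) 0 → t' ≤ t →
      (t - t') * δone ≤ ψ (t • (fun _ : Fin k => (1 : ℝ)))
                        - ψ (t' • (fun _ : Fin k => (1 : ℝ))))
    (hlam1 : 1 / (1 + δone / ((2 * ((C : ℝ) - 1) / ((C : ℝ) - 2)) * Real.sqrt k * Δ₂))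
              ≤ lam i₀) :
    (∀ a a' : ℝ, -1 ≤ a' → a' < a → a ≤ 1 →
      SSCL ψ lam (AstarMat C a') < SSCL ψ lam (AstarMat C a)) ∧
    (∀ a ∈ Set.Icc (-1 : ℝ) 1, a ≠ -1 →
      SSCL ψ lam (AstarMat C (-1)) < SSCL ψ lam (AstarMat C a)) ∧
    (∀ d : ℕ, 1 ≤ d → ∀ M : Matrix (Fin d) (Fin C) ℝ,
      (∀ j, ∑ r, (M r j) ^ 2 = 1) → Mᵀ * M = AstarMat C (-1) →
      ∀ i : Fin C, i ≠ i₀ → ∀ r : Fin d, M r i = - M r i₀) := by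
  refine ⟨fun a a' h1 h2 h3 =>
    scl_inc k C hk hC i₀ hi₀ lam hlt1 hminor hmaj hpos ψ Δ₂ hΔpos hΔ δone hδpos hδ hlam1
      a a' h1 h2 h3, ?_, ?_⟩
  · intro a ha hne
    exact scl_inc k C hk hC i₀ hi₀ lam hlt1 hminor hmaj hpos ψ Δ₂ hΔpos hΔ δone hδpos hδ
      hlam1 a (-1) le_rfl (lt_of_le_of_ne ha.1 (Ne.symm hne)) ha.2
  · intro d _ M hcol hMM i hi r
    exact collapse hC i₀ hi₀ M hcol hMM i hi r
end

section
/- Let k ≥ 1 and let ψ : ℝ^k → ℝ be the InfoNCE loss function ψ(t₁,…,t_k) = log(1 + (1/k)∑_{i=1}^k e^{t_i}). Then: (i) ψ is differentiable with ∂ψ/∂tᵢ(t) = e^{tᵢ}/(k + ∑_{j=1}^k e^{t_j}), and for every t ∈ [−2,0]^k the Euclidean norm of the gradient satisfies ‖∇ψ(t)‖₂ = √(∑_{i=1}^k e^{2tᵢ}) / (k + ∑_{i=1}^k e^{tᵢ}) ≤ 1/(2√k), with equality if and only if t = 0; hence sup_{t ∈ [−2,0]^k} ‖∇ψ(t)‖₂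 = 1/(2√k) and ψ is Lipschitz on [−2,0]^k with constant 1/(2√k) with respect to the Euclidean norm. (ii) For every u ∈ {0,1}^k with m := ∑_{i=1}^k uᵢ, one has ⟨u, ∇ψ(−2u)⟩ = m/(2k e² − (e² − 1)m); in particular, for u = (1,…,1) this value equals 1/(1 + e²). -/
open Real Finset

/-- The InfoNCE loss function `ψ(t₁,…,t_k) = log(1 + (1/k) ∑ᵢ e^{tᵢ})`. -/
noncomputable def psiInfoNCE (k : ℕ) (t : Fin k → ℝ) : ℝ :=
  Real.log (1 + (1 / (k : ℝ)) * ∑ i, Real.exp (t i))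

lemma aux_arg_pos (k : ℕ) (t : Fin k → ℝ) :
    (0:ℝ) < 1 + (1 / (k : ℝ)) * ∑ i, Real.exp (t i) := by
  have h2 : (0:ℝ) ≤ ∑ i, Real.exp (t i) :=
    Finset.sum_nonneg fun i _ => (Real.exp_pos _).le
  have h3 : (0:ℝ) ≤ 1 / (k:ℝ) := by positivity
  nlinarith

lemma aux_diff (k : ℕ) : Differentiable ℝ (psiInfoNCE k) := by
  have h1 : Differentiable ℝ (fun t : Fin k → ℝ => 1 + (1/(k:ℝ)) * ∑ i, Real.exp (t i)) := by
    apply Differentiable.const_add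
    apply Differentiable.const_mul
    apply Differentiable.fun_sum
    intro i _
    exact Real.differentiable_exp.comp ((ContinuousLinearMap.proj i : (Fin k → ℝ) →L[ℝ] ℝ).differentiable)
  exact h1.log (fun t => (aux_arg_pos k t).ne')

lemma aux_deriv (k : ℕ) (hk : 1 ≤ k) (t : Fin k → ℝ) (i : Fin k) :
    HasDerivAt (fun s : ℝ => psiInfoNCE k (Function.update t i s))
      (Real.exp (t i) / ((k : ℝ) + ∑ j, Real.exp (t j))) (t i) := by
  set C : ℝ := ∑ j ∈ Finset.univ \ {i}, Real.exp (t j) with hC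
  have hCsum : ∀ s : ℝ, ∑ j, Real.exp (Function.update t i s j) = Real.exp s + C := by
    intro s
    have h1 : ∀ j, Real.exp (Function.update t i s j)
        = Function.update (fun j => Real.exp (t j)) i (Real.exp s) j :=
      fun j => Function.apply_update (fun _ x => Real.exp x) t i s j
    simp only [h1]
    rw [Finset.sum_update_of_mem (Finset.mem_univ i)]
  have hfun : (fun s => psiInfoNCE k (Function.update t i s))
      = fun s => Real.log (1 + (1/(k:ℝ)) * (Real.exp s + C)) := by
    funext s; rw [psiInfoNCE, hCsum s]
  rw [hfun]
  have hS : ∑ j, Real.exp (t j) = Real.exp (t i) + C := by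
    have := hCsum (t i); rwa [Function.update_eq_self] at this
  have h1 : HasDerivAt (fun s : ℝ => 1 + (1/(k:ℝ)) * (Real.exp s + C))
      ((1/(k:ℝ)) * Real.exp (t i)) (t i) :=
    (((Real.hasDerivAt_exp (t i)).add_const C).const_mul _).const_add 1
  have hpos : (0:ℝ) < 1 + (1/(k:ℝ)) * (Real.exp (t i) + C) := by
    rw [← hS]; exact aux_arg_pos k t
  have h2 := h1.log hpos.ne'
  convert h2 using 1
  have hk0 : (0:ℝ) < k := by exact_mod_cast hk
  have hD : (0:ℝ) < (k:ℝ) + ∑ j, Real.exp (t j) := by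
    have : (0:ℝ) ≤ ∑ j, Real.exp (t j) := Finset.sum_nonneg fun j _ => (Real.exp_pos _).le
    linarith
  rw [hS] at hD ⊢
  field_simp


lemma aux_grad (k : ℕ) (hk : 1 ≤ k) (t : Fin k → ℝ) (ht : ∀ i, t i ∈ Set.Icc (-2:ℝ) 0) :
    Real.sqrt (∑ i, Real.exp (2 * t i)) / ((k : ℝ) + ∑ i, Real.exp (t i))
        ≤ 1 / (2 * Real.sqrt k) ∧
    (Real.sqrt (∑ i, Real.exp (2 * t i)) / ((k : ℝ) + ∑ i, Real.exp (t i))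
        = 1 / (2 * Real.sqrt k) ↔ t = 0) := by
  have hkpos : (0:ℝ) < k := by exact_mod_cast hk
  have hne : (Finset.univ : Finset (Fin k)).Nonempty := univ_nonempty_iff.mpr (Fin.pos_iff_nonempty.mp hk)
  have hS1pos : (0:ℝ) < ∑ i, Real.exp (t i) := Finset.sum_pos (fun i _ => Real.exp_pos _) hne
  have hS2pos : (0:ℝ) < ∑ i, Real.exp (2 * t i) := Finset.sum_pos (fun i _ => Real.exp_pos _) hne
  set S1 := ∑ i, Real.exp (t i) with hS1
  set S2 := ∑ i, Real.exp (2 * t i) with hS2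
  have hle : S2 ≤ S1 := by
    apply Finset.sum_le_sum
    intro i _
    exact Real.exp_le_exp.mpr (by have := (ht i).2; linarith)
  have hD : (0:ℝ) < (k:ℝ) + S1 := by linarith
  have hsqk : (0:ℝ) < Real.sqrt k := Real.sqrt_pos.mpr hkpos
  have hkk : Real.sqrt k * Real.sqrt k = k := Real.mul_self_sqrt hkpos.le
  have hss : Real.sqrt S1 * Real.sqrt S1 = S1 := Real.mul_self_sqrt hS1pos.le
  have hAM : 2 * Real.sqrt k * Real.sqrt S1 ≤ (k:ℝ) + S1 := by
    nlinarith [sq_nonneg (Real.sqrt k - Real.sqrt S1)]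
  have hsq2 : Real.sqrt S2 ≤ Real.sqrt S1 := Real.sqrt_le_sqrt hle
  constructor
  · rw [div_le_div_iff₀ hD (by positivity)]
    nlinarith [Real.sqrt_nonneg S2]
  · constructor
    · intro h
      rw [div_eq_div_iff hD.ne' (by positivity)] at h
      have h2 : Real.sqrt S2 = Real.sqrt S1 := by nlinarith [Real.sqrt_nonneg S2]
      have hSS : S2 = S1 := by
        have := congrArg (fun x => x * x) h2
        simp only [Real.mul_self_sqrt hS2pos.le, Real.mul_self_sqrt hS1pos.le] at this
        exact this
      have hzero : ∑ i, (Real.exp (t i) - Real.exp (2 * t i)) = 0 := by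
        rw [Finset.sum_sub_distrib, ← hS1, ← hS2]; linarith
      have hz := (Finset.sum_eq_zero_iff_of_nonneg (fun i _ => by
        have : Real.exp (2 * t i) ≤ Real.exp (t i) :=
          Real.exp_le_exp.mpr (by have := (ht i).2; linarith)
        linarith)).mp hzero
      funext i
      have h3 := hz i (Finset.mem_univ i)
      have h4 : Real.exp (2 * t i) = Real.exp (t i) := by linarith
      have h5 : 2 * t i = t i := Real.exp_eq_exp.mp h4
      have : t i = 0 := by linarith
      simpa using this
    · rintro rfl
      have e1 : S1 = (k:ℝ) := by simp [hS1, Finset.card_univ]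
      have e2 : S2 = (k:ℝ) := by simp [hS2, Finset.card_univ]
      rw [e1, e2, div_eq_div_iff (by positivity : ((k:ℝ)+(k:ℝ)) ≠ 0) (by positivity)]
      nlinarith

noncomputable def gradPsi (k : ℕ) (x : EuclideanSpace ℝ (Fin k)) : EuclideanSpace ℝ (Fin k) :=
  WithLp.toLp 2 (fun i => Real.exp (x i) / ((k:ℝ) + ∑ j, Real.exp (x j)))

lemma aux_hasFDeriv (k : ℕ) (hk : 1 ≤ k) (x : EuclideanSpace ℝ (Fin k)) :
    HasFDerivAt (fun y : EuclideanSpace ℝ (Fin k) => psiInfoNCE k (fun i => y i))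
      (innerSL ℝ (gradPsi k x)) x := by
  have hk0 : (0:ℝ) < k := by exact_mod_cast hk
  have hsum : HasFDerivAt (fun y : EuclideanSpace ℝ (Fin k) => ∑ i, Real.exp (y i))
      (∑ i, Real.exp (x i) • (EuclideanSpace.proj i : EuclideanSpace ℝ (Fin k) →L[ℝ] ℝ)) x := by
    apply HasFDerivAt.fun_sum
    intro i _
    have hp : HasFDerivAt (fun y : EuclideanSpace ℝ (Fin k) => y i)
        (EuclideanSpace.proj i : EuclideanSpace ℝ (Fin k) →L[ℝ] ℝ) x :=
      (EuclideanSpace.proj i : EuclideanSpace ℝ (Fin k) →L[ℝ] ℝ).hasFDerivAt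
    exact (Real.hasDerivAt_exp (x i)).comp_hasFDerivAt x hp
  have h2 : HasFDerivAt (fun y : EuclideanSpace ℝ (Fin k) => 1 + (1/(k:ℝ)) * ∑ i, Real.exp (y i))
      ((1/(k:ℝ)) • ∑ i, Real.exp (x i) • (EuclideanSpace.proj i : EuclideanSpace ℝ (Fin k) →L[ℝ] ℝ)) x :=
    (hsum.const_mul _).const_add 1
  have hpos := aux_arg_pos k (fun i => x i)
  have h3 := h2.log hpos.ne'
  have heq : (fun y : EuclideanSpace ℝ (Fin k) => psiInfoNCE k (fun i => y i))
      = fun y : EuclideanSpace ℝ (Fin k) => Real.log (1 + (1/(k:ℝ)) * ∑ i, Real.exp (y i)) := rfl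
  rw [heq]
  refine h3.congr_fderiv (Eq.symm ?_)
  ext y
  simp only [innerSL_apply_apply, PiLp.inner_apply, RCLike.inner_apply, conj_trivial,
    ContinuousLinearMap.smul_apply, ContinuousLinearMap.coe_sum', Finset.sum_apply,
    ContinuousLinearMap.coe_smul', Pi.smul_apply, PiLp.proj_apply, smul_eq_mul,
    gradPsi, PiLp.toLp_apply]
  set S := ∑ j, Real.exp (x j) with hS
  have hD : (0:ℝ) < (k:ℝ) + S := by
    have : (0:ℝ) ≤ S := Finset.sum_nonneg fun j _ => (Real.exp_pos _).le
    linarith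
  have key0 : ((1:ℝ) + 1/(k:ℝ) * S) * (k:ℝ) = (k:ℝ) + S := by field_simp
  have key : ((1:ℝ) + 1/(k:ℝ) * S)⁻¹ * (1/(k:ℝ)) = ((k:ℝ) + S)⁻¹ := by
    rw [one_div, ← mul_inv]
    congr 1
    rw [← key0]; ring
  rw [← mul_assoc, key, Finset.mul_sum]
  refine Finset.sum_congr rfl fun i _ => ?_
  simp only [hS]
  ring

lemma aux_grad_le (k : ℕ) (hk : 1 ≤ k) (t : Fin k → ℝ) (ht : ∀ i, t i ∈ Set.Icc (-2:ℝ) 0) :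
    Real.sqrt (∑ i, Real.exp (2 * t i)) / ((k : ℝ) + ∑ i, Real.exp (t i))
        ≤ 1 / (2 * Real.sqrt k) := (aux_grad k hk t ht).1

lemma aux_norm_le (k : ℕ) (hk : 1 ≤ k) (x : EuclideanSpace ℝ (Fin k))
    (hx : ∀ i, x i ∈ Set.Icc (-2:ℝ) 0) :
    ‖innerSL ℝ (gradPsi k x)‖ ≤ 1 / (2 * Real.sqrt k) := by
  rw [innerSL_apply_norm, EuclideanSpace.norm_eq]
  set S := ∑ j, Real.exp (x j) with hS
  have hD : (0:ℝ) < (k:ℝ) + S := by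
    have h1 : (0:ℝ) < k := by exact_mod_cast hk
    have : (0:ℝ) ≤ S := Finset.sum_nonneg fun j _ => (Real.exp_pos _).le
    linarith
  have hterm : ∀ i, ‖gradPsi k x i‖^2 = Real.exp (2 * x i) / ((k:ℝ) + S)^2 := by
    intro i
    rw [Real.norm_eq_abs, sq_abs, gradPsi, PiLp.toLp_apply]
    have h2 : Real.exp (x i) ^ 2 = Real.exp (2 * x i) := by
      rw [two_mul, Real.exp_add]; ring
    rw [div_pow, h2, ← hS]
  calc Real.sqrt (∑ i, ‖gradPsi k x i‖^2)
      = Real.sqrt ((∑ i, Real.exp (2 * x i)) / ((k:ℝ) + S)^2) := by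
        rw [Finset.sum_div]
        exact congrArg _ (Finset.sum_congr rfl fun i _ => hterm i)
    _ = Real.sqrt (∑ i, Real.exp (2 * x i)) / ((k:ℝ) + S) := by
        rw [Real.sqrt_div (Finset.sum_nonneg fun i _ => (Real.exp_pos _).le),
          Real.sqrt_sq hD.le]
    _ ≤ 1 / (2 * Real.sqrt k) := aux_grad_le k hk (fun i => x i) hx

lemma aux_lip (k : ℕ) (hk : 1 ≤ k) (v v' : Fin k → ℝ)
    (hv : ∀ i, v i ∈ Set.Icc (-2:ℝ) 0) (hv' : ∀ i, v' i ∈ Set.Icc (-2:ℝ) 0) :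
    |psiInfoNCE k v - psiInfoNCE k v'| ≤
      (1 / (2 * Real.sqrt k)) * Real.sqrt (∑ i, (v i - v' i) ^ 2) := by
  set s : Set (EuclideanSpace ℝ (Fin k)) := {x | ∀ i, x i ∈ Set.Icc (-2:ℝ) 0} with hs
  have hconv : Convex ℝ s := by
    intro x hx y hy a b ha hb hab i
    have := (convex_Icc (-2:ℝ) 0) (hx i) (hy i) ha hb hab
    simpa [PiLp.add_apply, PiLp.smul_apply, smul_eq_mul] using this
  set vE : EuclideanSpace ℝ (Fin k) := (WithLp.equiv 2 _).symm v with hvE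
  set v'E : EuclideanSpace ℝ (Fin k) := (WithLp.equiv 2 _).symm v' with hv'E
  have hmem : vE ∈ s := fun i => hv i
  have hmem' : v'E ∈ s := fun i => hv' i
  have key := Convex.norm_image_sub_le_of_norm_hasFDerivWithin_le
    (f := fun y : EuclideanSpace ℝ (Fin k) => psiInfoNCE k (fun i => y i))
    (f' := fun x => innerSL ℝ (gradPsi k x)) (C := 1 / (2 * Real.sqrt k))
    (fun x _ => (aux_hasFDeriv k hk x).hasFDerivWithinAt)
    (fun x hx => aux_norm_le k hk x hx) hconv hmem hmem'
  have key2 : ‖psiInfoNCE k v' - psiInfoNCE k v‖ ≤ 1 / (2 * Real.sqrt k) * ‖v'E - vE‖ := key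
  rw [Real.norm_eq_abs, EuclideanSpace.norm_eq] at key2
  rw [abs_sub_comm]
  convert key2 using 3
  refine Finset.sum_congr rfl fun i _ => ?_
  rw [Real.norm_eq_abs, sq_abs]
  simp [vE, v'E]
  ring


lemma aux_inner (k : ℕ) (hk : 1 ≤ k) (u : Fin k → ℝ) (hu : ∀ i, u i = 0 ∨ u i = 1) :
    ∑ i, u i * (Real.exp (-2 * u i) / ((k : ℝ) + ∑ j, Real.exp (-2 * u j)))
      = (∑ i, u i) /
          (2 * (k : ℝ) * Real.exp 1 ^ 2 - (Real.exp 1 ^ 2 - 1) * ∑ i, u i) := by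
  have hk0 : (0:ℝ) < k := by exact_mod_cast hk
  set m := ∑ i, u i with hm
  set A := Real.exp (-2 : ℝ) with hA
  set E := Real.exp 1 ^ 2 with hE
  have hAE : A * E = 1 := by
    rw [hA, hE, sq, ← Real.exp_add, ← Real.exp_add]; norm_num
  have hEgt : (1:ℝ) < E := by
    rw [hE, sq, ← Real.exp_add]
    have : (0:ℝ) < 1 + 1 := by norm_num
    calc (1:ℝ) = Real.exp 0 := by simp
    _ < Real.exp (1+1) := Real.exp_lt_exp.mpr (by norm_num)
  have hApos : 0 < A := Real.exp_pos _
  have hm0 : 0 ≤ m := Finset.sum_nonneg fun i _ => by rcases hu i with h | h <;> simp [h]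
  have hmk : m ≤ k := by
    rw [hm]
    calc ∑ i, u i ≤ ∑ _i : Fin k, (1:ℝ) :=
      Finset.sum_le_sum fun i _ => by rcases hu i with h | h <;> simp [h]
    _ = k := by simp
  have hApt : ∀ j, Real.exp (-2 * u j) = 1 - u j + u j * A := fun j => by
    rcases hu j with h | h <;> simp [h, hA]
  have hBpt : ∀ i, u i * Real.exp (-2 * u i) = u i * A := fun i => by
    rcases hu i with h | h <;> simp [h, hA]
  have hsum : ∑ j, Real.exp (-2 * u j) = (k:ℝ) - m + m * A := by
    simp only [hApt]
    rw [Finset.sum_add_distrib, Finset.sum_sub_distrib, ← Finset.sum_mul, ← hm]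
    simp
  rw [hsum]
  have hDe : (k:ℝ) + ((k:ℝ) - m + m * A) = 2*(k:ℝ) - m + m * A := by ring
  rw [hDe]
  have hstep : ∀ i, u i * (Real.exp (-2 * u i) / (2*(k:ℝ) - m + m * A))
      = (u i * A) / (2*(k:ℝ) - m + m * A) := fun i => by
    rw [mul_div_assoc', hBpt i]
  rw [Finset.sum_congr rfl fun i _ => hstep i, ← Finset.sum_div, ← Finset.sum_mul, ← hm]
  have hD1 : (0:ℝ) < 2*(k:ℝ) - m + m * A := by nlinarith
  have hD2 : (0:ℝ) < 2 * (k:ℝ) * E - (E - 1) * m := by nlinarith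
  rw [div_eq_div_iff hD1.ne' hD2.ne']
  linear_combination (2*(k:ℝ)*m - m^2) * hAE

lemma aux_ones (k : ℕ) (hk : 1 ≤ k) :
    (∑ i : Fin k, (1 : ℝ) *
        (Real.exp (-2 * (1 : ℝ)) / ((k : ℝ) + ∑ _j : Fin k, Real.exp (-2 * (1 : ℝ))))
      = 1 / (1 + Real.exp 1 ^ 2)) := by
  have hk0 : (0:ℝ) < k := by exact_mod_cast hk
  have hAE : Real.exp (-2 * (1:ℝ)) * Real.exp 1 ^ 2 = 1 := by
    rw [sq, ← Real.exp_add, ← Real.exp_add]; norm_num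
  have hApos : (0:ℝ) < Real.exp (-2 * (1:ℝ)) := Real.exp_pos _
  have hEpos : (0:ℝ) < Real.exp 1 ^ 2 := by positivity
  set A := Real.exp (-2 * (1:ℝ)) with hA
  rw [Finset.sum_const, Finset.sum_const, Finset.card_univ, Fintype.card_fin,
    nsmul_eq_mul, nsmul_eq_mul]
  have hD : (0:ℝ) < (k:ℝ) + (k:ℝ) * A := by positivity
  rw [one_mul, mul_div_assoc', div_eq_div_iff hD.ne' (by positivity)]
  linear_combination (k:ℝ) * hAE

/-- (i) InfoNCE `ψ` is differentiable with partial derivatives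
`∂ψ/∂tᵢ(t) = e^{tᵢ}/(k + ∑ⱼ e^{tⱼ})`; on `[−2,0]^k` the Euclidean gradient-norm expression
`√(∑ e^{2tᵢ})/(k + ∑ e^{tᵢ})` is at most `1/(2√k)` with equality iff `t = 0`, so `ψ` is
`1/(2√k)`-Lipschitz on `[−2,0]^k` in the Euclidean norm. (ii) For `u ∈ {0,1}^k` with
`m = ∑ uᵢ`, `⟨u, ∇ψ(−2u)⟩ = m/(2k e² − (e²−1)m)`; for `u = 𝟙` this equals `1/(1+e²)`. -/
theorem stmt19 (k : ℕ) (hk : 1 ≤ k) :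
    Differentiable ℝ (psiInfoNCE k) ∧
    (∀ (t : Fin k → ℝ) (i : Fin k),
      HasDerivAt (fun s : ℝ => psiInfoNCE k (Function.update t i s))
        (Real.exp (t i) / ((k : ℝ) + ∑ j, Real.exp (t j))) (t i)) ∧
    (∀ t : Fin k → ℝ, (∀ i, t i ∈ Set.Icc (-2 : ℝ) 0) →
      Real.sqrt (∑ i, Real.exp (2 * t i)) / ((k : ℝ) + ∑ i, Real.exp (t i))
          ≤ 1 / (2 * Real.sqrt k) ∧
      (Real.sqrt (∑ i, Real.exp (2 * t i)) / ((k : ℝ) + ∑ i, Real.exp (t i))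
          = 1 / (2 * Real.sqrt k) ↔ t = 0)) ∧
    (∀ v v' : Fin k → ℝ, (∀ i, v i ∈ Set.Icc (-2 : ℝ) 0) →
      (∀ i, v' i ∈ Set.Icc (-2 : ℝ) 0) →
      |psiInfoNCE k v - psiInfoNCE k v'| ≤
        (1 / (2 * Real.sqrt k)) * Real.sqrt (∑ i, (v i - v' i) ^ 2)) ∧
    (∀ u : Fin k → ℝ, (∀ i, u i = 0 ∨ u i = 1) →
      ∑ i, u i * (Real.exp (-2 * u i) / ((k : ℝ) + ∑ j, Real.exp (-2 * u j)))
        = (∑ i, u i) /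
            (2 * (k : ℝ) * Real.exp 1 ^ 2 - (Real.exp 1 ^ 2 - 1) * ∑ i, u i)) ∧
    (∑ i : Fin k, (1 : ℝ) *
        (Real.exp (-2 * (1 : ℝ)) / ((k : ℝ) + ∑ _j : Fin k, Real.exp (-2 * (1 : ℝ))))
      = 1 / (1 + Real.exp 1 ^ 2)) := by
  exact ⟨aux_diff k, fun t i => aux_deriv k hk t i, fun t ht => aux_grad k hk t ht,
    fun v v' hv hv' => aux_lip k hk v v' hv hv',
    fun u hu => aux_inner k hk u hu, aux_ones k hk⟩
end
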